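/- arXiv:1402.1092 — 3 statements merged into one kernel-verified Lean document; each statement's English description precedes it below -/
import Mathlib

section
/- Let {w_k}_{k∈ℕ₀} be the Walsh functions on [0,1] and define θ̂_k(ω) = w_k((ω+π)/(2π)) for −π ≤ ω < π, so that {θ̂_k}_{k∈ℕ₀} is a complete orthonormal system in L²[−π,π]. For f ∈ PW¹_π and t ∈ ℝ set c_k(f,t) = (1/(2π)) ∫_{−π}^{π} f̂(ω) θ̂_k(ω) e^{iωt} dω. Then for all f ∈ PW¹_π and all ĥ_T ∈ L^∞[−π,π], with (Tf)(t) = (1/(2π)) ∫_{−π}^{π} f̂(ω) ĥ_T(ω) e^{iωt} dω and (Tθ_k)(0) = (1/(2π)) ∫_{−π}^{π} ĥ_T(ω) θ̂_k(ω) dω, we have lim_{N→∞} sup_{t∈ℝ} | (Tf)(t) − Σ_{k=0}^{2^N} c_k(f,t) (Tθ_k)(0) | = 0. -/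
open MeasureTheory Filter Finset

/-- The `i`-th Rademacher function on `[0,1)`: `r_i(x) = (-1)^{⌊2^{i+1} x⌋}`. -/
noncomputable def rademacher (i : ℕ) (x : ℝ) : ℝ :=
  (-1 : ℝ) ^ (⌊x * 2 ^ (i + 1)⌋)

/-- The `k`-th Walsh function (Walsh–Paley ordering) on `[0,1)`:
`w_k = ∏_i r_i^{k_i}` where `k = ∑_i k_i 2^i` is the binary expansion of `k`.
(All set bits of `k` have index `< k`, so the product below suffices.) -/
noncomputable def walsh (k : ℕ) (x : ℝ) : ℝ :=
  ∏ i ∈ Finset.range k, if Nat.testBit k i then rademacher i x else 1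

/-- `θ̂_k(ω) = w_k((ω+π)/(2π))`, the Walsh system transplanted to `[-π,π)`. -/
noncomputable def walshTheta (k : ℕ) (ω : ℝ) : ℝ :=
  walsh k ((ω + Real.pi) / (2 * Real.pi))

lemma rademacher_eq_one_or (i : ℕ) (x : ℝ) :
    rademacher i x = 1 ∨ rademacher i x = -1 := by
  unfold rademacher
  rcases Int.even_or_odd ⌊x * 2 ^ (i + 1)⌋ with h | h
  · left; exact Even.neg_one_zpow h
  · right; exact Odd.neg_one_zpow h

lemma abs_rademacher (i : ℕ) (x : ℝ) : |rademacher i x| = 1 := by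
  rcases rademacher_eq_one_or i x with h | h <;> rw [h] <;> norm_num

lemma rademacher_of_nonneg {x : ℝ} (hx : 0 ≤ x) (i : ℕ) :
    rademacher i x = (-1 : ℝ) ^ (⌊x * 2 ^ (i + 1)⌋₊) := by
  unfold rademacher
  rw [← Int.natCast_floor_eq_floor (by positivity), zpow_natCast]

lemma natFloor_digit {x : ℝ} (hx : 0 ≤ x) {i N : ℕ} (h : i < N) :
    ⌊x * 2 ^ (i + 1)⌋₊ = ⌊x * 2 ^ N⌋₊ / 2 ^ (N - (i + 1)) := by
  have hN : (2:ℝ) ^ N = 2 ^ (i+1) * 2 ^ (N - (i+1)) := by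
    rw [← pow_add]; congr 1; omega
  have h2 : x * 2 ^ (i+1) = x * 2 ^ N / ((2 ^ (N - (i+1)) : ℕ) : ℝ) := by
    push_cast
    rw [hN]; field_simp
  rw [h2, Nat.floor_div_natCast]

lemma rademacher_eq_of_floor_eq {x y : ℝ} (hx : 0 ≤ x) (hy : 0 ≤ y) {i N : ℕ}
    (h : i < N) (hf : ⌊x * 2 ^ N⌋₊ = ⌊y * 2 ^ N⌋₊) :
    rademacher i x = rademacher i y := by
  rw [rademacher_of_nonneg hx, rademacher_of_nonneg hy,
    natFloor_digit hx h, natFloor_digit hy h, hf]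

lemma exists_rademacher_mul_eq_neg_one {x y : ℝ} (hx : 0 ≤ x) (hy : 0 ≤ y) {N : ℕ}
    (hxN : ⌊x * 2 ^ N⌋₊ < 2 ^ N) (hyN : ⌊y * 2 ^ N⌋₊ < 2 ^ N)
    (hne : ⌊x * 2 ^ N⌋₊ ≠ ⌊y * 2 ^ N⌋₊) :
    ∃ i < N, rademacher i x * rademacher i y = -1 := by
  set m := ⌊x * 2 ^ N⌋₊ with hm
  set m' := ⌊y * 2 ^ N⌋₊ with hm'
  have : ∃ j, m.testBit j ≠ m'.testBit j := by
    by_contra hc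
    push_neg at hc
    exact hne (Nat.eq_of_testBit_eq hc)
  obtain ⟨j, hj⟩ := this
  have hjN : j < N := by
    by_contra hc
    push_neg at hc
    have h1 : m.testBit j = false :=
      Nat.testBit_eq_false_of_lt (lt_of_lt_of_le hxN (Nat.pow_le_pow_right (by norm_num) hc))
    have h2 : m'.testBit j = false :=
      Nat.testBit_eq_false_of_lt (lt_of_lt_of_le hyN (Nat.pow_le_pow_right (by norm_num) hc))
    rw [h1, h2] at hj; exact hj rfl
  refine ⟨N - 1 - j, by omega, ?_⟩
  have hNj : N - (N - 1 - j + 1) = j := by omega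
  rw [rademacher_of_nonneg hx, rademacher_of_nonneg hy,
    natFloor_digit hx (by omega : N - 1 - j < N),
    natFloor_digit hy (by omega : N - 1 - j < N), hNj, ← hm, ← hm']
  rw [← pow_add]
  have hpar : (m / 2 ^ j % 2 = 1) ≠ (m' / 2 ^ j % 2 = 1) := by
    intro hc
    rw [Nat.testBit_eq_decide_div_mod_eq, Nat.testBit_eq_decide_div_mod_eq] at hj
    simp [hc] at hj
  have hodd : Odd (m / 2 ^ j + m' / 2 ^ j) := by
    rw [Nat.odd_iff]
    have h1 := Nat.mod_two_eq_zero_or_one (m / 2 ^ j)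
    have h2 := Nat.mod_two_eq_zero_or_one (m' / 2 ^ j)
    rcases h1 with h1 | h1 <;> rcases h2 with h2 | h2 <;> simp [h1, h2] at hpar ⊢ <;> omega
  exact Odd.neg_one_pow hodd

lemma testBit_support {k i : ℕ} (h : Nat.testBit k i = true) : i < k :=
  lt_of_lt_of_le (Nat.lt_two_pow_self (n := i)) (Nat.ge_two_pow_of_testBit h)

lemma walsh_eq_prod {k M : ℕ} (hk : k < 2 ^ M) (x : ℝ) :
    walsh k x = ∏ i ∈ Finset.range M, (if Nat.testBit k i then rademacher i x else 1) := by
  unfold walsh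
  have key : ∀ A : ℕ, (∀ i, Nat.testBit k i = true → i < A) →
      ∏ i ∈ Finset.range A, (if Nat.testBit k i then rademacher i x else 1)
        = ∏ i ∈ Finset.range (max k M), (if Nat.testBit k i then rademacher i x else 1) := by
    intro A hA
    rcases le_total A (max k M) with hle | hle
    · exact Finset.prod_subset (Finset.range_subset_range.2 hle) (by
        intro i _ hi
        simp only [Finset.mem_range, not_lt] at hi
        rw [if_neg]
        intro hbit
        exact absurd (hA i hbit) (not_lt.2 hi))
    · exact (Finset.prod_subset (Finset.range_subset_range.2 hle) (by
        intro i _ hi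
        simp only [Finset.mem_range, not_lt] at hi
        rw [if_neg]
        intro hbit
        exact absurd (testBit_support hbit)
          (not_lt.2 (le_trans (le_max_left k M) hi)))).symm
  rw [key k (fun i h => testBit_support h),
    ← key M (fun i h => lt_of_lt_of_le ((Nat.pow_lt_pow_iff_right (by norm_num)).1
      (lt_of_le_of_lt (Nat.ge_two_pow_of_testBit h) hk)) le_rfl)]

lemma walsh_two_pow (N : ℕ) (x : ℝ) : walsh (2 ^ N) x = rademacher N x := by
  rw [walsh_eq_prod (Nat.pow_lt_pow_right (by norm_num) (Nat.lt_succ_self N) : 2^N < 2^(N+1)) x]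
  rw [Finset.prod_eq_single N]
  · simp [Nat.testBit_two_pow]
  · intro b _ hb
    simp [Nat.testBit_two_pow, (Ne.symm hb)]
  · intro h
    exact absurd (Finset.self_mem_range_succ N) h

lemma testBit_two_pow_add_lt {k N i : ℕ} (hk : k < 2 ^ N) (hi : i < N) :
    Nat.testBit (2 ^ N + k) i = Nat.testBit k i := by
  rw [Nat.testBit_eq_decide_div_mod_eq, Nat.testBit_eq_decide_div_mod_eq]
  have hdvd : (2:ℕ) ^ N = 2 ^ (N - i) * 2 ^ i := by rw [← pow_add]; congr 1; omega
  have e1 : 2 ^ N + k = k + 2 ^ (N - i) * 2 ^ i := by rw [hdvd, Nat.add_comm]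
  have : (2 ^ N + k) / 2 ^ i = k / 2 ^ i + 2 ^ (N - i) := by
    rw [e1, Nat.add_mul_div_right _ _ (Nat.two_pow_pos i)]
  rw [this]
  have heven : 2 ^ (N - i) % 2 = 0 := by
    have : N - i = (N - i - 1) + 1 := by omega
    rw [this, pow_succ, Nat.mul_mod_left]
  have hmod : (k / 2 ^ i + 2 ^ (N - i)) % 2 = k / 2 ^ i % 2 := by omega
  rw [hmod]

lemma testBit_two_pow_add_self {k N : ℕ} (hk : k < 2 ^ N) :
    Nat.testBit (2 ^ N + k) N = true := by
  rw [Nat.testBit_eq_decide_div_mod_eq]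
  have e : 2 ^ N + k = k + 1 * 2 ^ N := by ring
  have : (2 ^ N + k) / 2 ^ N = 1 := by
    rw [e, Nat.add_mul_div_right _ _ (Nat.two_pow_pos N),
      Nat.div_eq_of_lt hk]
  rw [this]
  decide

lemma walsh_two_pow_add {k N : ℕ} (hk : k < 2 ^ N) (x : ℝ) :
    walsh (2 ^ N + k) x = rademacher N x * walsh k x := by
  have h1 : 2 ^ N + k < 2 ^ (N + 1) := by
    have : (2:ℕ) ^ (N+1) = 2 ^ N + 2 ^ N := by ring
    omega
  rw [walsh_eq_prod h1 x, walsh_eq_prod hk x, Finset.prod_range_succ,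
    if_pos (testBit_two_pow_add_self hk), mul_comm]
  congr 1
  apply Finset.prod_congr rfl
  intro i hi
  rw [testBit_two_pow_add_lt hk (Finset.mem_range.1 hi)]

lemma abs_walsh (k : ℕ) (x : ℝ) : |walsh k x| = 1 := by
  unfold walsh
  rw [Finset.abs_prod]
  apply Finset.prod_eq_one
  intro i _
  split
  · exact abs_rademacher i x
  · exact abs_one

lemma sum_walsh_mul (N : ℕ) (x y : ℝ) :
    ∑ k ∈ Finset.range (2 ^ N), walsh k x * walsh k y
      = ∏ i ∈ Finset.range N, (1 + rademacher i x * rademacher i y) := by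
  induction N with
  | zero => simp [walsh]
  | succ N ih =>
    rw [Finset.prod_range_succ, ← ih]
    have hsplit : (2:ℕ) ^ (N + 1) = 2 ^ N + 2 ^ N := by ring
    rw [hsplit, Finset.sum_range_add]
    have h2 : ∀ k ∈ Finset.range (2 ^ N),
        walsh (2 ^ N + k) x * walsh (2 ^ N + k) y
          = (rademacher N x * rademacher N y) * (walsh k x * walsh k y) := by
      intro k hk
      rw [walsh_two_pow_add (Finset.mem_range.1 hk), walsh_two_pow_add (Finset.mem_range.1 hk)]
      ring
    rw [Finset.sum_congr rfl h2, ← Finset.mul_sum]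
    ring

lemma sum_walsh_mul_eq (N : ℕ) {x y : ℝ} (hx : 0 ≤ x) (hy : 0 ≤ y)
    (hxN : ⌊x * 2 ^ N⌋₊ < 2 ^ N) (hyN : ⌊y * 2 ^ N⌋₊ < 2 ^ N) :
    ∑ k ∈ Finset.range (2 ^ N), walsh k x * walsh k y
      = if ⌊x * 2 ^ N⌋₊ = ⌊y * 2 ^ N⌋₊ then (2:ℝ) ^ N else 0 := by
  rw [sum_walsh_mul]
  split_ifs with h
  · have h2 : ∀ i ∈ Finset.range N, 1 + rademacher i x * rademacher i y = 2 := by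
      intro i hi
      rw [rademacher_eq_of_floor_eq hx hy (Finset.mem_range.1 hi) h]
      rcases rademacher_eq_one_or i y with h1 | h1 <;> rw [h1] <;> norm_num
    rw [Finset.prod_congr rfl h2, Finset.prod_const, Finset.card_range]
  · obtain ⟨i, hiN, hprod⟩ := exists_rademacher_mul_eq_neg_one hx hy hxN hyN h
    exact Finset.prod_eq_zero (Finset.mem_range.2 hiN) (by rw [hprod]; ring)

lemma walsh_eq_of_floor_eq {x y : ℝ} (hx : 0 ≤ x) (hy : 0 ≤ y) {k N : ℕ}
    (hk : k < 2 ^ N) (h : ⌊x * 2 ^ N⌋₊ = ⌊y * 2 ^ N⌋₊) :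
    walsh k x = walsh k y := by
  rw [walsh_eq_prod hk x, walsh_eq_prod hk y]
  apply Finset.prod_congr rfl
  intro i hi
  split
  · exact rademacher_eq_of_floor_eq hx hy (Finset.mem_range.1 hi) h
  · rfl

/-- left endpoint of the `j`-th dyadic subinterval of `[-π,π]` at level `N` -/
noncomputable def dyA (N j : ℕ) : ℝ := -Real.pi + j * (2 * Real.pi / 2 ^ N)

lemma dyA_zero (N : ℕ) : dyA N 0 = -Real.pi := by simp [dyA]

lemma dyA_last (N : ℕ) : dyA N (2 ^ N) = Real.pi := by
  have h2 : ((2:ℝ) ^ N) ≠ 0 := by positivity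
  simp only [dyA]
  push_cast
  field_simp
  ring

lemma dyA_mono (N : ℕ) {j j' : ℕ} (h : j ≤ j') : dyA N j ≤ dyA N j' := by
  have hL : (0:ℝ) < 2 * Real.pi / 2 ^ N := by positivity
  simp only [dyA]
  have : (j:ℝ) ≤ (j':ℝ) := by exact_mod_cast h
  nlinarith

lemma dyA_lt (N j : ℕ) : dyA N j < dyA N (j + 1) := by
  have hL : (0:ℝ) < 2 * Real.pi / 2 ^ N := by positivity
  simp only [dyA]
  push_cast
  nlinarith

lemma dyA_succ_sub (N j : ℕ) : dyA N (j + 1) - dyA N j = 2 * Real.pi / 2 ^ N := by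
  simp only [dyA]; push_cast; ring

lemma dyA_double (N j : ℕ) : dyA (N + 1) (2 * j) = dyA N j := by
  simp only [dyA]
  push_cast
  rw [pow_succ]
  field_simp

/-- the scaled variable `u(ω) = (ω+π)/(2π)` -/
noncomputable def uvar (ω : ℝ) : ℝ := (ω + Real.pi) / (2 * Real.pi)

lemma uvar_floor {N j : ℕ} (hj : j < 2 ^ N) {ω : ℝ}
    (hω : ω ∈ Set.Ioo (dyA N j) (dyA N (j + 1))) :
    0 ≤ uvar ω ∧ ⌊uvar ω * 2 ^ N⌋₊ = j := by
  have hπ := Real.pi_pos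
  obtain ⟨h1, h2⟩ := hω
  simp only [dyA] at h1 h2
  have hu0 : 0 ≤ uvar ω := by
    have : -Real.pi ≤ ω := by nlinarith [mul_nonneg (Nat.cast_nonneg j) (le_of_lt (show (0:ℝ) < 2*Real.pi/2^N by positivity))]
    have h0 : (0:ℝ) ≤ ω + Real.pi := by linarith
    unfold uvar; positivity
  refine ⟨hu0, ?_⟩
  have hN : (0:ℝ) < 2 ^ N := by positivity
  have hLpos : (0:ℝ) < 2 * Real.pi / 2 ^ N := by positivity
  have e : uvar ω * 2 ^ N = (ω + Real.pi) / (2 * Real.pi / 2 ^ N) := by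
    unfold uvar; field_simp
  rw [Nat.floor_eq_iff (by positivity : (0:ℝ) ≤ uvar ω * 2 ^ N), e]
  constructor
  · rw [le_div_iff₀ hLpos]; nlinarith
  · rw [div_lt_iff₀ hLpos]; push_cast at h2 ⊢; nlinarith

lemma floor_dyadic_rat (N j : ℕ) : ⌊((j:ℝ) / 2 ^ N) * 2 ^ N⌋₊ = j := by
  have h : ((j:ℝ) / 2 ^ N) * 2 ^ N = j := by field_simp
  rw [h, Nat.floor_natCast]

lemma walshTheta_eq_walsh_uvar (k : ℕ) (ω : ℝ) : walshTheta k ω = walsh k (uvar ω) := rfl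

lemma walshTheta_const {N j k : ℕ} (hj : j < 2 ^ N) (hk : k < 2 ^ N) {ω : ℝ}
    (hω : ω ∈ Set.Ioo (dyA N j) (dyA N (j + 1))) :
    walshTheta k ω = walsh k ((j:ℝ) / 2 ^ N) := by
  obtain ⟨hu0, hfl⟩ := uvar_floor hj hω
  rw [walshTheta_eq_walsh_uvar]
  exact walsh_eq_of_floor_eq hu0 (by positivity) hk (by rw [hfl, floor_dyadic_rat])

lemma walshTheta_two_pow_const {N m : ℕ} (hm : m < 2 ^ (N + 1)) {ω : ℝ}
    (hω : ω ∈ Set.Ioo (dyA (N + 1) m) (dyA (N + 1) (m + 1))) :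
    walshTheta (2 ^ N) ω = (-1 : ℝ) ^ m := by
  obtain ⟨hu0, hfl⟩ := uvar_floor hm hω
  rw [walshTheta_eq_walsh_uvar, walsh_two_pow, rademacher_of_nonneg hu0, hfl]

lemma setIntegral_mul_theta {G θfn : ℝ → ℂ} {a b : ℝ} (c : ℂ)
    (h : ∀ ω ∈ Set.Ioo a b, θfn ω = c) :
    ∫ ω in Set.Ioc a b, G ω * θfn ω = c * ∫ ω in Set.Ioc a b, G ω := by
  have hb : ∀ᵐ ω : ℝ ∂volume, ω ≠ b := by
    rw [ae_iff]
    have : {ω : ℝ | ¬ω ≠ b} = {b} := by ext ω; simp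
    rw [this]
    exact Real.volume_singleton
  have h0 : ∀ᵐ ω ∂volume, ω ∈ Set.Ioc a b → G ω * θfn ω = G ω * c := by
    filter_upwards [hb] with ω hω hmem
    rw [h ω ⟨hmem.1, lt_of_le_of_ne hmem.2 hω⟩]
  rw [setIntegral_congr_ae measurableSet_Ioc h0, integral_mul_const, mul_comm]

lemma Icc_dyA_subset {N : ℕ} {j : ℕ} (hj : j + 1 ≤ 2 ^ N) :
    Set.Icc (dyA N j) (dyA N (j + 1)) ⊆ Set.Icc (-Real.pi) Real.pi := by
  apply Set.Icc_subset_Icc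
  · rw [← dyA_zero N]; exact dyA_mono N (Nat.zero_le j)
  · rw [← dyA_last N]; exact dyA_mono N hj

lemma integral_Icc_eq_sum {G : ℝ → ℂ} (hG : IntegrableOn G (Set.Icc (-Real.pi) Real.pi)) (N : ℕ) :
    ∫ ω in Set.Icc (-Real.pi) Real.pi, G ω
      = ∑ j ∈ Finset.range (2 ^ N), ∫ ω in Set.Ioc (dyA N j) (dyA N (j + 1)), G ω := by
  have hint : ∀ k < 2 ^ N, IntervalIntegrable G volume (dyA N k) (dyA N (k + 1)) := by
    intro k hk
    apply IntegrableOn.intervalIntegrable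
    rw [Set.uIcc_of_le (dyA_lt N k).le]
    exact hG.mono_set (Icc_dyA_subset hk)
  have hsum := intervalIntegral.sum_integral_adjacent_intervals hint
  rw [integral_Icc_eq_integral_Ioc]
  have hend : ∫ x in (dyA N 0)..(dyA N (2 ^ N)), G x = ∫ ω in Set.Ioc (-Real.pi) Real.pi, G ω := by
    rw [dyA_zero, dyA_last, intervalIntegral.integral_of_le (by linarith [Real.pi_pos])]
  rw [← hend, ← hsum]
  apply Finset.sum_congr rfl
  intro j _
  rw [intervalIntegral.integral_of_le (dyA_lt N j).le]

lemma measurable_rademacher (i : ℕ) : Measurable (rademacher i) := by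
  have h1 : Measurable fun x : ℝ => x * 2 ^ (i + 1) := measurable_id.mul_const _
  exact (measurable_from_top (f := fun z : ℤ => (-1:ℝ) ^ z)).comp (Int.measurable_floor.comp h1)

lemma measurable_walsh (k : ℕ) : Measurable (walsh k) := by
  unfold walsh
  apply Finset.measurable_prod
  intro i _
  split
  · exact measurable_rademacher i
  · exact measurable_const

lemma measurable_walshTheta (k : ℕ) : Measurable (walshTheta k) :=
  (measurable_walsh k).comp ((measurable_id.add_const _).div_const _)

lemma norm_walshTheta (k : ℕ) (ω : ℝ) : ‖((walshTheta k ω : ℝ) : ℂ)‖ = 1 := by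
  rw [Complex.norm_real, Real.norm_eq_abs]
  exact abs_walsh k _

lemma integrableOn_mul_theta {G : ℝ → ℂ} {s : Set ℝ} (hG : IntegrableOn G s) (k : ℕ) :
    IntegrableOn (fun ω => G ω * (walshTheta k ω : ℂ)) s := by
  have h := Integrable.bdd_mul (f := fun ω => ((walshTheta k ω : ℝ) : ℂ)) (c := 1) hG
    (((Complex.measurable_ofReal.comp (measurable_walshTheta k))).aestronglyMeasurable)
    (Eventually.of_forall fun ω => le_of_eq (norm_walshTheta k ω))
  simpa [mul_comm, IntegrableOn] using h

lemma coef_eq {G : ℝ → ℂ} (hG : IntegrableOn G (Set.Icc (-Real.pi) Real.pi)) {k N : ℕ}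
    (hk : k < 2 ^ N) :
    ∫ ω in Set.Icc (-Real.pi) Real.pi, G ω * (walshTheta k ω : ℂ)
      = ∑ j ∈ Finset.range (2 ^ N),
          ((walsh k ((j:ℝ) / 2 ^ N) : ℝ) : ℂ) * ∫ ω in Set.Ioc (dyA N j) (dyA N (j + 1)), G ω := by
  rw [integral_Icc_eq_sum (integrableOn_mul_theta hG k) N]
  apply Finset.sum_congr rfl
  intro j hj
  apply setIntegral_mul_theta
  intro ω hω
  rw [walshTheta_const (Finset.mem_range.1 hj) hk hω]

lemma key_identity (N : ℕ) {G H : ℝ → ℂ}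
    (hG : IntegrableOn G (Set.Icc (-Real.pi) Real.pi))
    (hH : IntegrableOn H (Set.Icc (-Real.pi) Real.pi)) :
    ∑ k ∈ Finset.range (2 ^ N),
        (∫ ω in Set.Icc (-Real.pi) Real.pi, G ω * (walshTheta k ω : ℂ)) *
        (∫ ω in Set.Icc (-Real.pi) Real.pi, H ω * (walshTheta k ω : ℂ))
      = ((2:ℝ) ^ N : ℝ) * ∑ j ∈ Finset.range (2 ^ N),
          (∫ ω in Set.Ioc (dyA N j) (dyA N (j + 1)), G ω) *
          (∫ ω in Set.Ioc (dyA N j) (dyA N (j + 1)), H ω) := by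
  set P : ℕ → ℂ := fun j => ∫ ω in Set.Ioc (dyA N j) (dyA N (j + 1)), G ω with hP
  set Q : ℕ → ℂ := fun j => ∫ ω in Set.Ioc (dyA N j) (dyA N (j + 1)), H ω with hQ
  set e : ℕ → ℕ → ℝ := fun k j => walsh k ((j:ℝ) / 2 ^ N) with he
  have horth : ∀ j ∈ Finset.range (2 ^ N), ∀ j' ∈ Finset.range (2 ^ N),
      ∑ k ∈ Finset.range (2 ^ N), e k j * e k j' = if j = j' then (2:ℝ) ^ N else 0 := by
    intro j hj j' hj'
    have h := sum_walsh_mul_eq N (x := (j:ℝ)/2^N) (y := (j':ℝ)/2^N)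
      (by positivity) (by positivity)
      (by rw [floor_dyadic_rat]; exact Finset.mem_range.1 hj)
      (by rw [floor_dyadic_rat]; exact Finset.mem_range.1 hj')
    rw [floor_dyadic_rat, floor_dyadic_rat] at h
    exact h
  calc ∑ k ∈ Finset.range (2 ^ N),
        (∫ ω in Set.Icc (-Real.pi) Real.pi, G ω * (walshTheta k ω : ℂ)) *
        (∫ ω in Set.Icc (-Real.pi) Real.pi, H ω * (walshTheta k ω : ℂ))
      = ∑ k ∈ Finset.range (2 ^ N), ∑ j ∈ Finset.range (2 ^ N), ∑ j' ∈ Finset.range (2 ^ N),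
          (((e k j * e k j' : ℝ)) : ℂ) * (P j * Q j') := by
        apply Finset.sum_congr rfl
        intro k hk
        rw [coef_eq hG (Finset.mem_range.1 hk), coef_eq hH (Finset.mem_range.1 hk),
          Finset.sum_mul_sum]
        apply Finset.sum_congr rfl; intro j _
        apply Finset.sum_congr rfl; intro j' _
        push_cast
        ring
    _ = ∑ j ∈ Finset.range (2 ^ N), ∑ j' ∈ Finset.range (2 ^ N),
          ((∑ k ∈ Finset.range (2 ^ N), (e k j * e k j' : ℝ) : ℝ) : ℂ) * (P j * Q j') := by
        rw [Finset.sum_comm]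
        apply Finset.sum_congr rfl; intro j _
        rw [Finset.sum_comm]
        apply Finset.sum_congr rfl; intro j' _
        rw [← Finset.sum_mul]
        push_cast
        ring
    _ = ∑ j ∈ Finset.range (2 ^ N), ∑ j' ∈ Finset.range (2 ^ N),
          (if j = j' then (((2:ℝ) ^ N : ℝ) : ℂ) else 0) * (P j * Q j') := by
        apply Finset.sum_congr rfl; intro j hj
        apply Finset.sum_congr rfl; intro j' hj'
        rw [horth j hj j' hj']
        split_ifs <;> simp
    _ = ((2:ℝ) ^ N : ℝ) * ∑ j ∈ Finset.range (2 ^ N), P j * Q j := by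
        rw [Finset.mul_sum]
        apply Finset.sum_congr rfl; intro j hj
        have hterm : ∀ j', (if j = j' then (((2:ℝ) ^ N : ℝ) : ℂ) else 0) * (P j * Q j')
            = if j = j' then (((2:ℝ) ^ N : ℝ) : ℂ) * (P j * Q j') else 0 := by
          intro j'; split_ifs <;> simp
        rw [Finset.sum_congr rfl (fun j' _ => hterm j'), Finset.sum_ite_eq, if_pos hj]

lemma sum_range_two_mul {M : Type*} [AddCommMonoid M] (n : ℕ) (g : ℕ → M) :
    ∑ m ∈ Finset.range (2 * n), g m = ∑ j ∈ Finset.range n, (g (2 * j) + g (2 * j + 1)) := by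
  induction n with
  | zero => simp
  | succ n ih =>
    have h : 2 * (n + 1) = (2 * n + 1) + 1 := by ring
    rw [h, Finset.sum_range_succ, Finset.sum_range_succ, ih, Finset.sum_range_succ, add_assoc]

lemma setIntegral_const_Ioo {φ : ℝ → ℂ} {a b : ℝ} (hab : a ≤ b) (c : ℂ)
    (h : ∀ ω ∈ Set.Ioo a b, φ ω = c) :
    ∫ ω in Set.Ioc a b, φ ω = (b - a) • c := by
  have hb : ∀ᵐ ω : ℝ ∂volume, ω ≠ b := by
    rw [ae_iff]
    have : {ω : ℝ | ¬ω ≠ b} = {b} := by ext ω; simp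
    rw [this]
    exact Real.volume_singleton
  have h0 : ∀ᵐ ω ∂volume, ω ∈ Set.Ioc a b → φ ω = c := by
    filter_upwards [hb] with ω hω hmem
    exact h ω ⟨hmem.1, lt_of_le_of_ne hmem.2 hω⟩
  rw [setIntegral_congr_ae measurableSet_Ioc h0, setIntegral_const, measureReal_def, Real.volume_Ioc,
    ENNReal.toReal_ofReal (by linarith)]

lemma Ioc_dyA_subset {N j : ℕ} (hj : j + 1 ≤ 2 ^ N) :
    Set.Ioc (dyA N j) (dyA N (j + 1)) ⊆ Set.Icc (-Real.pi) Real.pi :=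
  Set.Subset.trans Set.Ioc_subset_Icc_self (Icc_dyA_subset hj)

/-- a function constant on each dyadic interval of level `N` is orthogonal to `θ_{2^N}` -/
lemma stepfn_orthogonal (N : ℕ) {Φ : ℝ → ℂ} (hΦ : IntegrableOn Φ (Set.Icc (-Real.pi) Real.pi))
    (c : ℕ → ℂ) (hc : ∀ j < 2 ^ N, ∀ ω ∈ Set.Ioo (dyA N j) (dyA N (j + 1)), Φ ω = c j) :
    ∫ ω in Set.Icc (-Real.pi) Real.pi, Φ ω * (walshTheta (2 ^ N) ω : ℂ) = 0 := by
  rw [integral_Icc_eq_sum (integrableOn_mul_theta hΦ (2 ^ N)) (N + 1)]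
  have hval : ∀ m < 2 ^ (N + 1),
      ∫ ω in Set.Ioc (dyA (N + 1) m) (dyA (N + 1) (m + 1)), Φ ω * (walshTheta (2 ^ N) ω : ℂ)
        = (Real.pi / 2 ^ N) • (c (m / 2) * (-1 : ℂ) ^ m) := by
    intro m hm
    have hm2 : m / 2 < 2 ^ N := by
      have : m < 2 * 2 ^ N := by rw [← pow_succ']; exact hm
      omega
    have hsub : Set.Ioo (dyA (N + 1) m) (dyA (N + 1) (m + 1))
        ⊆ Set.Ioo (dyA N (m / 2)) (dyA N (m / 2 + 1)) := by
      apply Set.Ioo_subset_Ioo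
      · rw [← dyA_double N (m / 2)]; exact dyA_mono (N + 1) (by omega)
      · have : dyA N (m / 2 + 1) = dyA (N + 1) (2 * (m / 2 + 1)) := (dyA_double N _).symm
        rw [this]; exact dyA_mono (N + 1) (by omega)
    have hlen : dyA (N + 1) (m + 1) - dyA (N + 1) m = Real.pi / 2 ^ N := by
      rw [dyA_succ_sub]
      rw [pow_succ]
      ring
    rw [setIntegral_const_Ioo (dyA_lt (N + 1) m).le _ (fun ω hω => ?_), hlen]
    rw [hc (m / 2) hm2 ω (hsub hω), walshTheta_two_pow_const hm hω]
    push_cast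
    ring
  have hpow : (2:ℕ) ^ (N + 1) = 2 * 2 ^ N := by rw [pow_succ']
  rw [Finset.sum_congr rfl (fun m hm => hval m (Finset.mem_range.1 hm)), hpow,
    sum_range_two_mul]
  apply Finset.sum_eq_zero
  intro j _
  have h1 : (2 * j) / 2 = j := by omega
  have h2 : (2 * j + 1) / 2 = j := by omega
  have hneg : ((-1:ℂ)) ^ (2 * j) = 1 := by rw [pow_mul]; norm_num
  rw [h1, h2, pow_succ, hneg]
  rw [Complex.real_smul, Complex.real_smul]
  ring

lemma jdx_spec {ω : ℝ} (hω : ω ∈ Set.Ioo (-Real.pi) Real.pi) (N : ℕ) :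
    ⌊uvar ω * 2 ^ N⌋₊ < 2 ^ N ∧ dyA N ⌊uvar ω * 2 ^ N⌋₊ ≤ ω
      ∧ ω < dyA N (⌊uvar ω * 2 ^ N⌋₊ + 1) := by
  have hπ := Real.pi_pos
  obtain ⟨h1, h2⟩ := hω
  have hu0 : 0 ≤ uvar ω := by
    have h0 : (0:ℝ) ≤ ω + Real.pi := by linarith
    unfold uvar; positivity
  have hu1 : uvar ω < 1 := by
    unfold uvar
    rw [div_lt_one (by positivity)]
    linarith
  have hN : (0:ℝ) < 2 ^ N := by positivity
  have hr : uvar ω * 2 ^ N < 2 ^ N := by nlinarith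
  have hjlt : ⌊uvar ω * 2 ^ N⌋₊ < 2 ^ N := by
    rw [Nat.floor_lt (by positivity)]
    exact_mod_cast hr
  have hLpos : (0:ℝ) < 2 * Real.pi / 2 ^ N := by positivity
  have hprod : uvar ω * 2 ^ N * (2 * Real.pi / 2 ^ N) = ω + Real.pi := by
    unfold uvar; field_simp
  refine ⟨hjlt, ?_, ?_⟩
  · have hle : (⌊uvar ω * 2 ^ N⌋₊ : ℝ) ≤ uvar ω * 2 ^ N := Nat.floor_le (by positivity)
    have := mul_le_mul_of_nonneg_right hle hLpos.le
    rw [hprod] at this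
    simp only [dyA]
    linarith
  · have hlt : uvar ω * 2 ^ N < ⌊uvar ω * 2 ^ N⌋₊ + 1 := Nat.lt_floor_add_one _
    have := mul_lt_mul_of_pos_right hlt hLpos
    rw [hprod] at this
    simp only [dyA]
    push_cast
    linarith

lemma norm_exp_I_mul (ω t : ℝ) : ‖Complex.exp (Complex.I * ω * t)‖ = 1 := by
  rw [Complex.norm_exp]
  simp [Complex.mul_re]

set_option maxHeartbeats 2000000 in
/-- Theorem 71, second part: for every `f ∈ PW¹_π` (given by its
integrable Fourier transform `f̂` on `[-π,π]`) and every stable LTI system (given by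
`ĥ_T ∈ L^∞[-π,π]`), the sums `∑_{k=0}^{2^N} c_k(f,t) (Tθ_k)(0)` built on the Walsh-type
complete orthonormal system `{θ̂_k}` converge uniformly on `ℝ` to `(Tf)(t)` as `N → ∞`. -/
theorem stmt11 (fhat : ℝ → ℂ) (hf : IntegrableOn fhat (Set.Icc (-Real.pi) Real.pi))
    (hT : ℝ → ℂ) (hhT : MemLp hT ⊤ (volume.restrict (Set.Icc (-Real.pi) Real.pi))) :
    TendstoUniformly
      (fun (N : ℕ) (t : ℝ) =>
        ∑ k ∈ Finset.range (2 ^ N + 1),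
          ((1 / (2 * Real.pi)) *
              ∫ ω in Set.Icc (-Real.pi) Real.pi,
                fhat ω * (walshTheta k ω : ℂ) * Complex.exp (Complex.I * ω * t)) *
          ((1 / (2 * Real.pi)) *
              ∫ ω in Set.Icc (-Real.pi) Real.pi, hT ω * (walshTheta k ω : ℂ)))
      (fun t : ℝ =>
        (1 / (2 * Real.pi)) *
          ∫ ω in Set.Icc (-Real.pi) Real.pi,
            fhat ω * hT ω * Complex.exp (Complex.I * ω * t))
      Filter.atTop := by
  have hπ := Real.pi_pos
  set I : Set ℝ := Set.Icc (-Real.pi) Real.pi with hI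
  haveI hfin : IsFiniteMeasure (volume.restrict I) := by
    constructor
    rw [Measure.restrict_apply_univ]
    exact (isCompact_Icc).measure_lt_top
  have hTint : IntegrableOn hT I := hhT.integrable le_top
  obtain ⟨C, hC0, hCb⟩ : ∃ C : ℝ, 0 ≤ C ∧ ∀ᵐ ω ∂(volume.restrict I), ‖hT ω‖ ≤ C := by
    refine ⟨(eLpNormEssSup hT (volume.restrict I)).toReal, ENNReal.toReal_nonneg, ?_⟩
    have h2 : eLpNormEssSup hT (volume.restrict I) < ⊤ := by
      have := hhT.2; rwa [eLpNorm_exponent_top] at this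
    filter_upwards [ae_le_eLpNormEssSup (f := hT) (μ := volume.restrict I)] with ω hω
    calc ‖hT ω‖ = ((‖hT ω‖₊ : ENNReal)).toReal := by simp
    _ ≤ _ := ENNReal.toReal_mono h2.ne hω
  -- the local average operator
  set avg : ℕ → ℕ → ℂ := fun N j =>
    (((2:ℝ) ^ N / (2 * Real.pi) : ℝ) : ℂ) * ∫ ω in Set.Ioc (dyA N j) (dyA N (j + 1)), hT ω
    with havg
  set A : ℕ → ℝ → ℂ := fun N ω => avg N ⌊uvar ω * 2 ^ N⌋₊ with hA
  have hAconst : ∀ N j, j < 2 ^ N → ∀ ω ∈ Set.Ioo (dyA N j) (dyA N (j + 1)),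
      A N ω = avg N j := by
    intro N j hj ω hω
    simp only [hA]
    rw [(uvar_floor hj hω).2]
  have hAmeas : ∀ N, Measurable (A N) := by
    intro N
    exact (measurable_from_top (f := avg N)).comp
      (Nat.measurable_floor.comp ((((measurable_id.add_const Real.pi).div_const
        (2 * Real.pi))).mul_const _))
  have havgbound : ∀ N j, j + 1 ≤ 2 ^ N → ‖avg N j‖ ≤ C := by
    intro N j hj
    have hnorm : ‖∫ ω in Set.Ioc (dyA N j) (dyA N (j + 1)), hT ω‖ ≤ C * (2 * Real.pi / 2 ^ N) := by
      have hb := ae_restrict_of_ae_restrict_of_subset (Ioc_dyA_subset hj) hCb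
      have := norm_integral_le_of_norm_le (f := hT)
        (μ := volume.restrict (Set.Ioc (dyA N j) (dyA N (j + 1))))
        (integrable_const C) hb
      calc ‖∫ ω in Set.Ioc (dyA N j) (dyA N (j + 1)), hT ω‖
          ≤ ∫ (_ : ℝ) in Set.Ioc (dyA N j) (dyA N (j + 1)), C := this
        _ = C * (2 * Real.pi / 2 ^ N) := by
            rw [setIntegral_const, measureReal_def, Real.volume_Ioc, dyA_succ_sub,
              ENNReal.toReal_ofReal (by positivity)]
            rw [smul_eq_mul, mul_comm]
    rw [havg, norm_mul]
    have h1 : ‖(((2:ℝ) ^ N / (2 * Real.pi) : ℝ) : ℂ)‖ = (2:ℝ) ^ N / (2 * Real.pi) := by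
      rw [Complex.norm_real, Real.norm_of_nonneg (by positivity)]
    rw [h1]
    calc (2:ℝ) ^ N / (2 * Real.pi) * ‖∫ ω in Set.Ioc (dyA N j) (dyA N (j + 1)), hT ω‖
        ≤ (2:ℝ) ^ N / (2 * Real.pi) * (C * (2 * Real.pi / 2 ^ N)) := by
          apply mul_le_mul_of_nonneg_left hnorm (by positivity)
      _ = C := by field_simp
  have hmemIoo : ∀ᵐ ω ∂(volume.restrict I), ω ∈ Set.Ioo (-Real.pi) Real.pi := by
    have hends : ∀ᵐ ω : ℝ ∂volume, ω ∉ ({-Real.pi, Real.pi} : Set ℝ) := by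
      rw [ae_iff]
      have he : {ω : ℝ | ¬ω ∉ ({-Real.pi, Real.pi} : Set ℝ)} = {-Real.pi, Real.pi} := by
        ext ω; simp [not_not]; tauto
      rw [he]
      exact Set.Countable.measure_zero (((Set.finite_singleton Real.pi).insert (-Real.pi)).countable) _
    filter_upwards [ae_restrict_mem measurableSet_Icc, ae_restrict_of_ae hends] with ω h1 h2
    simp only [Set.mem_insert_iff, Set.mem_singleton_iff, not_or] at h2
    exact ⟨lt_of_le_of_ne h1.1 (Ne.symm h2.1), lt_of_le_of_ne h1.2 h2.2⟩
  have hAboundIoo : ∀ N, ∀ ω ∈ Set.Ioo (-Real.pi) Real.pi, ‖A N ω‖ ≤ C := by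
    intro N ω hω
    obtain ⟨hjlt, -, -⟩ := jdx_spec hω N
    exact havgbound N _ hjlt
  have hAint : ∀ N, IntegrableOn (A N) I := by
    intro N
    apply Integrable.mono' (integrable_const C) ((hAmeas N).aestronglyMeasurable)
    filter_upwards [hmemIoo] with ω hω using hAboundIoo N ω hω
  -- a.e. convergence of the averages
  set Hext : ℝ → ℂ := I.indicator hT with hHext
  have hHextInt : Integrable Hext := hTint.integrable_indicator measurableSet_Icc
  have hconv : ∀ᵐ ω ∂(volume.restrict I),
      Tendsto (fun N => A N ω) atTop (nhds (hT ω)) := by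
    have besi := IsUnifLocDoublingMeasure.ae_tendsto_average_norm_sub (μ := (volume : Measure ℝ))
      hHextInt.locallyIntegrable 1
    filter_upwards [ae_restrict_of_ae besi, hmemIoo, ae_restrict_mem measurableSet_Icc]
      with ω hbesi hωIoo hωI
    set w : ℕ → ℝ := fun N => dyA N ⌊uvar ω * 2 ^ N⌋₊ + Real.pi / 2 ^ N with hw
    set δ : ℕ → ℝ := fun N => Real.pi / 2 ^ N with hδ
    have hδpos : ∀ N, 0 < δ N := fun N => by positivity
    have hδto : Tendsto δ atTop (nhdsWithin 0 (Set.Ioi 0)) := by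
      apply tendsto_nhdsWithin_of_tendsto_nhds_of_eventually_within
      · exact Tendsto.const_div_atTop (tendsto_pow_atTop_atTop_of_one_lt (by norm_num)) _
      · exact Eventually.of_forall (fun N => hδpos N)
    have hsub : ∀ N, Set.Ioc (dyA N ⌊uvar ω * 2 ^ N⌋₊) (dyA N (⌊uvar ω * 2 ^ N⌋₊ + 1))
        ⊆ Metric.closedBall (w N) (δ N) := by
      intro N y hy
      have hlen := dyA_succ_sub N ⌊uvar ω * 2 ^ N⌋₊
      rw [Metric.mem_closedBall, Real.dist_eq, abs_le]
      obtain ⟨hy1, hy2⟩ := hy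
      have hd : Real.pi / 2 ^ N + Real.pi / 2 ^ N = 2 * Real.pi / 2 ^ N := by ring
      constructor <;> simp only [hw, hδ] <;> linarith
    have hmem : ∀ N, ω ∈ Metric.closedBall (w N) (1 * δ N) := by
      intro N
      obtain ⟨-, h1, h2⟩ := jdx_spec hωIoo N
      have hlen := dyA_succ_sub N ⌊uvar ω * 2 ^ N⌋₊
      have hd : Real.pi / 2 ^ N + Real.pi / 2 ^ N = 2 * Real.pi / 2 ^ N := by ring
      rw [Metric.mem_closedBall, Real.dist_eq, one_mul, abs_le]
      constructor <;> simp only [hw, hδ] <;> linarith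
    have hballs := hbesi w δ hδto (Eventually.of_forall hmem)
    rw [tendsto_iff_norm_sub_tendsto_zero]
    refine squeeze_zero (fun N => norm_nonneg _) (fun N => ?_) hballs
    obtain ⟨hjlt, -, -⟩ := jdx_spec hωIoo N
    set j := ⌊uvar ω * 2 ^ N⌋₊ with hj
    have hIocsub : Set.Ioc (dyA N j) (dyA N (j + 1)) ⊆ I := Ioc_dyA_subset hjlt
    have hvol : (volume (Metric.closedBall (w N) (δ N))).toReal = 2 * Real.pi / 2 ^ N := by
      rw [Real.volume_closedBall, ENNReal.toReal_ofReal (by positivity)]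
      simp only [hδ]; ring
    have hvolIoc : (volume (Set.Ioc (dyA N j) (dyA N (j + 1)))).toReal = 2 * Real.pi / 2 ^ N := by
      rw [Real.volume_Ioc, dyA_succ_sub, ENNReal.toReal_ofReal (by positivity)]
    have hint_eq : ∫ y in Set.Ioc (dyA N j) (dyA N (j + 1)), hT y
        = ∫ y in Set.Ioc (dyA N j) (dyA N (j + 1)), Hext y := by
      apply setIntegral_congr_ae measurableSet_Ioc
      apply Eventually.of_forall
      intro y hy
      rw [hHext, Set.indicator_of_mem (hIocsub hy)]
    have hc1 : (((2:ℝ) ^ N / (2 * Real.pi) : ℝ) : ℂ) * ((2 * Real.pi / 2 ^ N : ℝ) : ℂ) = 1 := by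
      rw [← Complex.ofReal_mul]
      norm_cast
      field_simp
    have hA_eq : A N ω - hT ω
        = (((2:ℝ) ^ N / (2 * Real.pi) : ℝ) : ℂ)
            * ∫ y in Set.Ioc (dyA N j) (dyA N (j + 1)), (Hext y - Hext ω) := by
      have hfinIoc : volume (Set.Ioc (dyA N j) (dyA N (j + 1))) < ⊤ := by
        rw [Real.volume_Ioc]; exact ENNReal.ofReal_lt_top
      rw [integral_sub (hHextInt.integrableOn) (integrableOn_const hfinIoc.ne),
        setIntegral_const, measureReal_def, hvolIoc]
      have hTω : hT ω = Hext ω := by rw [hHext, Set.indicator_of_mem hωI]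
      have hAN : A N ω = avg N j := rfl
      rw [hAN]
      simp only [havg]
      rw [hint_eq, hTω, mul_sub]
      congr 1
      rw [Complex.real_smul, ← mul_assoc, hc1, one_mul]
    calc ‖A N ω - hT ω‖
        = (2:ℝ) ^ N / (2 * Real.pi)
            * ‖∫ y in Set.Ioc (dyA N j) (dyA N (j + 1)), (Hext y - Hext ω)‖ := by
          rw [hA_eq, norm_mul, Complex.norm_real, Real.norm_of_nonneg (by positivity)]
      _ ≤ (2:ℝ) ^ N / (2 * Real.pi)
            * ∫ y in Set.Ioc (dyA N j) (dyA N (j + 1)), ‖Hext y - Hext ω‖ := by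
          exact mul_le_mul_of_nonneg_left (norm_integral_le_integral_norm _) (by positivity)
      _ ≤ (2:ℝ) ^ N / (2 * Real.pi)
            * ∫ y in Metric.closedBall (w N) (δ N), ‖Hext y - Hext ω‖ := by
          apply mul_le_mul_of_nonneg_left ?_ (by positivity)
          apply setIntegral_mono_set
          · have hballfin : volume (Metric.closedBall (w N) (δ N)) < ⊤ := by
              rw [Real.volume_closedBall]; exact ENNReal.ofReal_lt_top
            exact (hHextInt.integrableOn.sub (integrableOn_const hballfin.ne)).norm
          · exact Eventually.of_forall (fun y => norm_nonneg _)
          · exact HasSubset.Subset.eventuallyLE (hsub N)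
      _ = ⨍ y in Metric.closedBall (w N) (δ N), ‖Hext y - Hext ω‖ := by
          rw [setAverage_eq, measureReal_def, hvol, smul_eq_mul]
          congr 1
          rw [inv_div]
  -- error quantities
  set e1 : ℕ → ℝ := fun N => ∫ ω in I, ‖fhat ω‖ * ‖A N ω - hT ω‖ with he1
  set e2 : ℕ → ℝ := fun N => ∫ ω in I, ‖A N ω - hT ω‖ with he2
  have hdiffmeas : ∀ N, AEStronglyMeasurable (fun ω => A N ω - hT ω) (volume.restrict I) :=
    fun N => ((hAmeas N).aestronglyMeasurable.sub hhT.1)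
  have hdiffbound : ∀ N, ∀ᵐ ω ∂(volume.restrict I), ‖A N ω - hT ω‖ ≤ 2 * C := by
    intro N
    filter_upwards [hmemIoo, hCb] with ω h1 h2
    calc ‖A N ω - hT ω‖ ≤ ‖A N ω‖ + ‖hT ω‖ := norm_sub_le _ _
      _ ≤ C + C := add_le_add (hAboundIoo N ω h1) h2
      _ = 2 * C := by ring
  have hdiffconv : ∀ᵐ ω ∂(volume.restrict I),
      Tendsto (fun N => ‖A N ω - hT ω‖) atTop (nhds 0) := by
    filter_upwards [hconv] with ω h
    rwa [tendsto_iff_norm_sub_tendsto_zero] at h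
  have hE1 : Tendsto e1 atTop (nhds 0) := by
    have h := tendsto_integral_of_dominated_convergence (μ := volume.restrict I)
      (F := fun N ω => ‖fhat ω‖ * ‖A N ω - hT ω‖) (f := fun _ => (0:ℝ))
      (bound := fun ω => ‖fhat ω‖ * (2 * C))
      (fun N => hf.norm.aestronglyMeasurable.mul (hdiffmeas N).norm)
      (hf.norm.mul_const _)
      (fun N => by
        filter_upwards [hdiffbound N] with ω hb
        rw [Real.norm_of_nonneg (mul_nonneg (norm_nonneg _) (norm_nonneg _))]
        exact mul_le_mul_of_nonneg_left hb (norm_nonneg _))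
      (by
        filter_upwards [hdiffconv] with ω hc
        simpa using hc.const_mul ‖fhat ω‖)
    simpa using h
  have hE2 : Tendsto e2 atTop (nhds 0) := by
    have h := tendsto_integral_of_dominated_convergence (μ := volume.restrict I)
      (F := fun N ω => ‖A N ω - hT ω‖) (f := fun _ => (0:ℝ))
      (bound := fun _ => 2 * C)
      (fun N => (hdiffmeas N).norm)
      (integrable_const _)
      (fun N => by
        filter_upwards [hdiffbound N] with ω hb
        rwa [Real.norm_of_nonneg (norm_nonneg _)])
      (by filter_upwards [hdiffconv] with ω hc using hc)
    simpa using h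
  -- constants
  set cC : ℂ := 1 / (2 * (Real.pi : ℂ)) with hcC
  have hcCr : cC = (((1 / (2 * Real.pi)) : ℝ) : ℂ) := by rw [hcC]; push_cast; ring
  have hcCnorm : ‖cC‖ = 1 / (2 * Real.pi) := by
    rw [hcCr, Complex.norm_real, Real.norm_of_nonneg (by positivity)]
  set Mf : ℝ := ∫ ω in I, ‖fhat ω‖ with hMf
  have hMf0 : 0 ≤ Mf := integral_nonneg (fun ω => norm_nonneg _)
  have he20 : ∀ N, 0 ≤ e2 N := fun N => integral_nonneg (fun ω => norm_nonneg _)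
  -- integrability package
  have hGt : ∀ t : ℝ, IntegrableOn (fun ω => fhat ω * Complex.exp (Complex.I * ω * t)) I := by
    intro t
    have hm : AEStronglyMeasurable (fun ω : ℝ => Complex.exp (Complex.I * ω * t))
        (volume.restrict I) :=
      (Complex.continuous_exp.comp
        ((continuous_const.mul Complex.continuous_ofReal).mul continuous_const)).aestronglyMeasurable
    have h := Integrable.bdd_mul (f := fun ω : ℝ => Complex.exp (Complex.I * ω * t)) (c := 1) hf hm
      (Eventually.of_forall fun ω => (norm_exp_I_mul ω t).le)
    exact h.congr (Eventually.of_forall fun ω => mul_comm _ _)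
  have hHmulG : ∀ t : ℝ, IntegrableOn
      (fun ω => (fhat ω * Complex.exp (Complex.I * ω * t)) * hT ω) I := by
    intro t
    have h := Integrable.bdd_mul (f := hT)
      (g := fun ω => fhat ω * Complex.exp (Complex.I * ω * t)) (c := C) (hGt t) hhT.1 hCb
    exact h.congr (Eventually.of_forall fun ω => mul_comm _ _)
  have hGmulSub : ∀ (N : ℕ) (t : ℝ), IntegrableOn
      (fun ω => (fhat ω * Complex.exp (Complex.I * ω * t)) * (hT ω - A N ω)) I := by
    intro N t
    have hb : ∀ᵐ ω ∂(volume.restrict I), ‖hT ω - A N ω‖ ≤ 2 * C := by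
      filter_upwards [hdiffbound N] with ω h; rwa [norm_sub_rev] at h
    have h := Integrable.bdd_mul (f := fun ω => hT ω - A N ω)
      (g := fun ω => fhat ω * Complex.exp (Complex.I * ω * t)) (c := 2 * C) (hGt t)
      (hhT.1.sub (hAmeas N).aestronglyMeasurable) hb
    exact h.congr (Eventually.of_forall fun ω => mul_comm _ _)
  have hGmulA : ∀ (N : ℕ) (t : ℝ), IntegrableOn
      (fun ω => (fhat ω * Complex.exp (Complex.I * ω * t)) * A N ω) I := by
    intro N t
    have hb : ∀ᵐ ω ∂(volume.restrict I), ‖A N ω‖ ≤ C := by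
      filter_upwards [hmemIoo] with ω h using hAboundIoo N ω h
    have h := Integrable.bdd_mul (f := fun ω => A N ω)
      (g := fun ω => fhat ω * Complex.exp (Complex.I * ω * t)) (c := C) (hGt t)
      (hAmeas N).aestronglyMeasurable hb
    exact h.congr (Eventually.of_forall fun ω => mul_comm _ _)
  have he1int : ∀ N : ℕ, IntegrableOn (fun ω => ‖fhat ω‖ * ‖A N ω - hT ω‖) I := by
    intro N
    have h := Integrable.bdd_mul (f := fun ω => ‖A N ω - hT ω‖) (g := fun ω => ‖fhat ω‖)
      (c := 2 * C) hf.norm (hdiffmeas N).norm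
      (by filter_upwards [hdiffbound N] with ω h;
          rwa [Real.norm_of_nonneg (norm_nonneg _)])
    exact h.congr (Eventually.of_forall fun ω => mul_comm _ _)
  -- the key quantitative bound
  have hbound : ∀ (N : ℕ) (t : ℝ),
      dist (cC * ∫ ω in I, fhat ω * hT ω * Complex.exp (Complex.I * ω * t))
        (∑ k ∈ Finset.range (2 ^ N + 1),
          (cC * ∫ ω in I, fhat ω * (walshTheta k ω : ℂ) * Complex.exp (Complex.I * ω * t)) *
          (cC * ∫ ω in I, hT ω * (walshTheta k ω : ℂ)))
        ≤ 1 / (2 * Real.pi) * e1 N + (1 / (2 * Real.pi)) ^ 2 * Mf * e2 N := by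
    intro N t
    set G : ℝ → ℂ := fun ω => fhat ω * Complex.exp (Complex.I * ω * t) with hGdef
    have hGint : IntegrableOn G I := hGt t
    have hre1 : ∀ k : ℕ,
        (∫ ω in I, fhat ω * (walshTheta k ω : ℂ) * Complex.exp (Complex.I * ω * t))
          = ∫ ω in I, G ω * (walshTheta k ω : ℂ) := fun k =>
      integral_congr_ae (Eventually.of_forall fun ω => by simp only [hGdef]; ring)
    have hre2 : (∫ ω in I, fhat ω * hT ω * Complex.exp (Complex.I * ω * t))
        = ∫ ω in I, G ω * hT ω :=
      integral_congr_ae (Eventually.of_forall fun ω => by simp only [hGdef]; ring)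
    have horth : ∫ ω in I, A N ω * (walshTheta (2 ^ N) ω : ℂ) = 0 :=
      stepfn_orthogonal N (hAint N) (avg N) (fun j hj ω hω => hAconst N j hj ω hω)
    have hsplitA : ∫ ω in I, G ω * A N ω
        = ∑ j ∈ Finset.range (2 ^ N),
            (∫ ω in Set.Ioc (dyA N j) (dyA N (j + 1)), G ω) * avg N j := by
      rw [integral_Icc_eq_sum (hGmulA N t) N]
      apply Finset.sum_congr rfl
      intro j hj
      rw [setIntegral_mul_theta (G := G) (θfn := fun ω => A N ω) (avg N j)
        (fun ω hω => hAconst N j (Finset.mem_range.1 hj) ω hω), mul_comm]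
    have hmain : (∑ k ∈ Finset.range (2 ^ N),
          (cC * ∫ ω in I, G ω * (walshTheta k ω : ℂ)) *
          (cC * ∫ ω in I, hT ω * (walshTheta k ω : ℂ)))
        = cC * (∫ ω in I, G ω * hT ω) - cC * ∫ ω in I, G ω * (hT ω - A N ω) := by
      have hs1 : ∀ k ∈ Finset.range (2 ^ N),
          (cC * ∫ ω in I, G ω * (walshTheta k ω : ℂ)) *
          (cC * ∫ ω in I, hT ω * (walshTheta k ω : ℂ))
            = cC ^ 2 * ((∫ ω in I, G ω * (walshTheta k ω : ℂ)) *
                (∫ ω in I, hT ω * (walshTheta k ω : ℂ))) := fun k _ => by ring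
      rw [Finset.sum_congr rfl hs1, ← Finset.mul_sum, key_identity N hGint hTint]
      have hsub2 : ∫ ω in I, G ω * (hT ω - A N ω)
          = (∫ ω in I, G ω * hT ω) - ∫ ω in I, G ω * A N ω := by
        rw [← integral_sub (hHmulG t) (hGmulA N t)]
        exact integral_congr_ae (Eventually.of_forall fun ω => by ring)
      rw [hsub2, hsplitA]
      have hav : ∀ j ∈ Finset.range (2 ^ N),
          (∫ ω in Set.Ioc (dyA N j) (dyA N (j + 1)), G ω) * avg N j
            = (((2:ℝ) ^ N / (2 * Real.pi) : ℝ) : ℂ) *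
              ((∫ ω in Set.Ioc (dyA N j) (dyA N (j + 1)), G ω) *
               (∫ ω in Set.Ioc (dyA N j) (dyA N (j + 1)), hT ω)) := by
        intro j _; simp only [havg]; ring
      rw [Finset.sum_congr rfl hav, ← Finset.mul_sum]
      have hπC : ((Real.pi : ℂ)) ≠ 0 := Complex.ofReal_ne_zero.mpr (ne_of_gt hπ)
      have hc2 : (((2:ℝ) ^ N / (2 * Real.pi) : ℝ) : ℂ) = cC * (((2:ℝ) ^ N : ℝ) : ℂ) := by
        rw [hcC]; push_cast; field_simp
      rw [hc2]
      push_cast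
      ring
    have hdiff1 : ‖cC * ∫ ω in I, G ω * (hT ω - A N ω)‖ ≤ 1 / (2 * Real.pi) * e1 N := by
      rw [norm_mul, hcCnorm]
      apply mul_le_mul_of_nonneg_left ?_ (by positivity)
      apply norm_integral_le_of_norm_le (he1int N)
      apply Eventually.of_forall
      intro ω
      simp only [hGdef]
      rw [norm_mul, norm_mul, norm_exp_I_mul, mul_one, norm_sub_rev]
    have hextra : ‖(cC * ∫ ω in I, G ω * (walshTheta (2 ^ N) ω : ℂ)) *
          (cC * ∫ ω in I, hT ω * (walshTheta (2 ^ N) ω : ℂ))‖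
        ≤ (1 / (2 * Real.pi)) ^ 2 * Mf * e2 N := by
      have ha : ‖∫ ω in I, G ω * (walshTheta (2 ^ N) ω : ℂ)‖ ≤ Mf := by
        apply norm_integral_le_of_norm_le hf.norm
        apply Eventually.of_forall
        intro ω
        simp only [hGdef]
        rw [norm_mul, norm_mul, norm_exp_I_mul, mul_one, norm_walshTheta, mul_one]
      have hbn : ‖∫ ω in I, hT ω * (walshTheta (2 ^ N) ω : ℂ)‖ ≤ e2 N := by
        have hb : ∫ ω in I, hT ω * (walshTheta (2 ^ N) ω : ℂ)
            = ∫ ω in I, (hT ω - A N ω) * (walshTheta (2 ^ N) ω : ℂ) := by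
          rw [← sub_zero (∫ ω in I, hT ω * (walshTheta (2 ^ N) ω : ℂ)), ← horth,
            ← integral_sub (integrableOn_mul_theta hTint _) (integrableOn_mul_theta (hAint N) _)]
          exact integral_congr_ae (Eventually.of_forall fun ω => by ring)
        rw [hb]
        have hint2 : IntegrableOn (fun ω => ‖A N ω - hT ω‖) I :=
          ((hAint N).sub hTint).norm
        apply norm_integral_le_of_norm_le hint2
        apply Eventually.of_forall
        intro ω
        rw [norm_mul, norm_walshTheta, mul_one, norm_sub_rev]
      have h1 : ‖cC * ∫ ω in I, G ω * (walshTheta (2 ^ N) ω : ℂ)‖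
          ≤ 1 / (2 * Real.pi) * Mf := by
        rw [norm_mul, hcCnorm]; exact mul_le_mul_of_nonneg_left ha (by positivity)
      have h2 : ‖cC * ∫ ω in I, hT ω * (walshTheta (2 ^ N) ω : ℂ)‖
          ≤ 1 / (2 * Real.pi) * e2 N := by
        rw [norm_mul, hcCnorm]; exact mul_le_mul_of_nonneg_left hbn (by positivity)
      calc ‖(cC * ∫ ω in I, G ω * (walshTheta (2 ^ N) ω : ℂ)) *
            (cC * ∫ ω in I, hT ω * (walshTheta (2 ^ N) ω : ℂ))‖
          = ‖cC * ∫ ω in I, G ω * (walshTheta (2 ^ N) ω : ℂ)‖ *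
            ‖cC * ∫ ω in I, hT ω * (walshTheta (2 ^ N) ω : ℂ)‖ := norm_mul _ _
        _ ≤ (1 / (2 * Real.pi) * Mf) * (1 / (2 * Real.pi) * e2 N) :=
            mul_le_mul h1 h2 (norm_nonneg _) (by positivity)
        _ = (1 / (2 * Real.pi)) ^ 2 * Mf * e2 N := by ring
    rw [dist_eq_norm, hre2, Finset.sum_range_succ]
    simp only [hre1]
    rw [hmain]
    have heq : ∀ P Q R : ℂ, P - (P - Q + R) = Q - R := by intros; ring
    rw [heq]
    exact le_trans (norm_sub_le _ _) (add_le_add hdiff1 hextra)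
  -- conclusion
  have hD : Tendsto (fun N => 1 / (2 * Real.pi) * e1 N + (1 / (2 * Real.pi)) ^ 2 * Mf * e2 N)
      atTop (nhds 0) := by
    have h1 := hE1.const_mul (1 / (2 * Real.pi))
    have h2 := hE2.const_mul ((1 / (2 * Real.pi)) ^ 2 * Mf)
    simpa using h1.add h2
  rw [Metric.tendstoUniformly_iff]
  intro ε hε
  filter_upwards [hD.eventually_lt_const hε] with N hN
  intro t
  exact lt_of_le_of_lt (hbound N t) hN
end

section
/- Let 0 < σ < π and let {θ̂_n}_{n∈ℕ} be a complete orthonormal system of real-valued functions in L²[−π,π] (with inner product (1/(2π)) ∫_{−π}^{π} u v̄ dω) for which there is a constant C₀ such that (1/(2π)) ∫_{−π}^{π} | Σ_{n=1}^{N} θ̂_n(ω) θ̂_n(ω₁) | dω₁ ≤ C₀ for all ω ∈ [−σ,σ] and all N ∈ ℕ. For f ∈ PW¹_σ define c_n(f) = (1/(2π)) ∫_{−σ}^{σ} f̂(ω) θ̂_n(ω) dω and (U_N f̂)(ω) = Σ_{n=1}^{N} c_n(f) θ̂_n(ω). Then for every f ∈ PW¹_σ: (i) (1/(2π)) ∫_{−π}^{π}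 |(U_N f̂)(ω)| dω ≤ C₀ ‖f‖_{PW¹_σ} for all N ∈ ℕ, and (ii) lim_{N→∞} (1/(2π)) ∫_{−π}^{π} | f̂(ω) − (U_N f̂)(ω) | dω = 0. -/
open MeasureTheory Filter Finset

private lemma coeFn_finset_sum_ae {α E : Type*} [MeasurableSpace α] {μ : Measure α}
    [NormedAddCommGroup E] {p : ENNReal} (s : Finset ℕ) (f : ℕ → Lp E p μ) (g : ℕ → α → E)
    (h : ∀ i ∈ s, ⇑(f i) =ᵐ[μ] g i) :
    ⇑(∑ i ∈ s, f i) =ᵐ[μ] fun a => ∑ i ∈ s, g i a := by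
  classical
  induction s using Finset.induction_on with
  | empty => simp only [Finset.sum_empty]; exact Lp.coeFn_zero E p μ
  | insert a s hnot ih =>
    rw [Finset.sum_insert hnot]
    filter_upwards [Lp.coeFn_add (f a) (∑ i ∈ s, f i), h a (Finset.mem_insert_self a s),
      ih fun i hi => h i (Finset.mem_insert_of_mem hi)] with ω h1 h2 h3
    simp only [h1, Pi.add_apply, h2, h3, Finset.sum_insert hnot]

set_option maxHeartbeats 1000000 in
/-- let `0 < σ < π` and let `{θ̂_n}` be a complete orthonormal system of
real-valued functions in `L²[-π,π]` (inner product `(1/(2π))∫ u v̄`) for which there is a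
constant `C₀` with `(1/(2π)) ∫_{-π}^{π} |∑_{n<N} θ̂_n(ω) θ̂_n(ω₁)| dω₁ ≤ C₀` for all
`ω ∈ [-σ,σ]` and all `N`. Then for each `f ∈ PW¹_σ` (given by its integrable Fourier
transform `f̂` on `[-σ,σ]`, extended by zero), with `c_n(f) = (1/(2π))∫_{-σ}^{σ} f̂ θ̂_n`
and `U_N f̂ = ∑_{n<N} c_n(f) θ̂_n`:
(i) `(1/(2π)) ∫_{-π}^{π} |U_N f̂| ≤ C₀ ‖f‖_{PW¹_σ}` for all `N`, and
(ii) `(1/(2π)) ∫_{-π}^{π} |f̂ - U_N f̂| → 0` as `N → ∞`. -/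
theorem stmt15 (σ : ℝ) (hσ0 : 0 < σ) (hσπ : σ < Real.pi)
    (θhat : ℕ → ℝ → ℝ)
    (hθ2 : ∀ n, MemLp (θhat n) 2 (volume.restrict (Set.Icc (-Real.pi) Real.pi)))
    (hortho : ∀ n m : ℕ, (1 / (2 * Real.pi)) *
        (∫ ω in Set.Icc (-Real.pi) Real.pi, θhat n ω * θhat m ω) =
        if n = m then 1 else 0)
    (hcomplete : ∀ g : ℝ → ℂ, MemLp g 2 (volume.restrict (Set.Icc (-Real.pi) Real.pi)) →
      (∀ n, (∫ ω in Set.Icc (-Real.pi) Real.pi, g ω * (θhat n ω : ℂ)) = 0) →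
      g =ᵐ[volume.restrict (Set.Icc (-Real.pi) Real.pi)] 0)
    (C₀ : ℝ)
    (hC₀ : ∀ ω ∈ Set.Icc (-σ) σ, ∀ N : ℕ,
      (1 / (2 * Real.pi)) *
          (∫ ω₁ in Set.Icc (-Real.pi) Real.pi,
            |∑ n ∈ Finset.range N, θhat n ω * θhat n ω₁|) ≤ C₀)
    (fhat : ℝ → ℂ) (hf : IntegrableOn fhat (Set.Icc (-σ) σ)) :
    (∀ N : ℕ,
      (1 / (2 * Real.pi)) *
          (∫ ω in Set.Icc (-Real.pi) Real.pi,
            ‖∑ n ∈ Finset.range N,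
                ((1 / (2 * Real.pi)) * ∫ ω₁ in Set.Icc (-σ) σ, fhat ω₁ * (θhat n ω₁ : ℂ)) *
                  (θhat n ω : ℂ)‖) ≤
        C₀ * ((1 / (2 * Real.pi)) * ∫ ω in Set.Icc (-σ) σ, ‖fhat ω‖)) ∧
    Filter.Tendsto (fun N : ℕ =>
        (1 / (2 * Real.pi)) *
          ∫ ω in Set.Icc (-Real.pi) Real.pi,
            ‖(if ω ∈ Set.Icc (-σ) σ then fhat ω else 0) -
                ∑ n ∈ Finset.range N,
                  ((1 / (2 * Real.pi)) * ∫ ω₁ in Set.Icc (-σ) σ, fhat ω₁ * (θhat n ω₁ : ℂ)) *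
                    (θhat n ω : ℂ)‖)
      Filter.atTop (nhds 0) := by
  have hπ0 : (0:ℝ) < Real.pi := Real.pi_pos
  have h2π : (0:ℝ) < 2 * Real.pi := by linarith
  set Iπ : Set ℝ := Set.Icc (-Real.pi) Real.pi with hIπdef
  set Iσ : Set ℝ := Set.Icc (-σ) σ with hIσdef
  have hsub : Iσ ⊆ Iπ := Set.Icc_subset_Icc (by linarith) (by linarith)
  have hμle : volume.restrict Iσ ≤ volume.restrict Iπ := Measure.restrict_mono hsub le_rfl
  have h0σ : (0:ℝ) ∈ Iσ := Set.mem_Icc.mpr ⟨by linarith, by linarith⟩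
  have hθint : ∀ n, Integrable (θhat n) (volume.restrict Iπ) :=
    fun n => (hθ2 n).integrable one_le_two
  have hθm : ∀ n, AEStronglyMeasurable (θhat n) (volume.restrict Iπ) := fun n => (hθ2 n).1
  have hθmσ : ∀ n, AEStronglyMeasurable (θhat n) (volume.restrict Iσ) :=
    fun n => (hθm n).mono_measure hμle
  have hC₀0 : 0 ≤ C₀ := by
    have := hC₀ 0 h0σ 0
    simpa using this
  -- positivity of L¹ norms of the θ's
  have hθ1pos : ∀ n, 0 < ∫ ω in Iπ, |θhat n ω| := by
    intro n
    rcases (integral_nonneg (fun ω => abs_nonneg (θhat n ω)) :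
        0 ≤ ∫ ω in Iπ, |θhat n ω|).lt_or_eq with h | h
    · exact h
    · exfalso
      have habs : (fun ω => |θhat n ω|) =ᵐ[volume.restrict Iπ] 0 :=
        (integral_eq_zero_iff_of_nonneg (fun ω => abs_nonneg _) (hθint n).abs).mp h.symm
      have hzero : (fun ω => θhat n ω * θhat n ω) =ᵐ[volume.restrict Iπ] 0 := by
        filter_upwards [habs] with ω hω
        have : |θhat n ω| = 0 := hω
        have h0 : θhat n ω = 0 := abs_eq_zero.mp this
        simp [h0]
      have h1 := hortho n n
      rw [if_pos rfl, integral_congr_ae hzero] at h1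
      simp at h1
  -- boundedness of each θ n on Iσ
  have hbd : ∀ n, ∃ B : ℝ, 0 ≤ B ∧ ∀ ω ∈ Iσ, |θhat n ω| ≤ B := by
    intro n
    refine ⟨(4 * Real.pi * C₀) / (∫ ω in Iπ, |θhat n ω|),
      div_nonneg (by positivity) (hθ1pos n).le, fun ω hω => ?_⟩
    rw [le_div_iff₀ (hθ1pos n)]
    have key1 : ∀ N : ℕ, (∫ ω₁ in Iπ, |∑ k ∈ Finset.range N, θhat k ω * θhat k ω₁|) ≤
        2 * Real.pi * C₀ := by
      intro N
      have h1 := hC₀ ω hω N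
      have h2 : (0:ℝ) < 1 / (2 * Real.pi) := by positivity
      calc (∫ ω₁ in Iπ, |∑ k ∈ Finset.range N, θhat k ω * θhat k ω₁|)
          = (2 * Real.pi) * ((1 / (2 * Real.pi)) *
            (∫ ω₁ in Iπ, |∑ k ∈ Finset.range N, θhat k ω * θhat k ω₁|)) := by
            field_simp
        _ ≤ (2 * Real.pi) * C₀ := by
            exact mul_le_mul_of_nonneg_left h1 h2π.le
        _ = 2 * Real.pi * C₀ := by ring
    have intK : ∀ N : ℕ, Integrable
        (fun ω₁ => ∑ k ∈ Finset.range N, θhat k ω * θhat k ω₁) (volume.restrict Iπ) :=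
      fun N => integrable_finset_sum _ (fun k _ => (hθint k).const_mul _)
    have hpt : ∀ ω₁ : ℝ, |θhat n ω| * |θhat n ω₁| ≤
        |∑ k ∈ Finset.range (n+1), θhat k ω * θhat k ω₁| +
        |∑ k ∈ Finset.range n, θhat k ω * θhat k ω₁| := by
      intro ω₁
      have hdiff : θhat n ω * θhat n ω₁ =
          (∑ k ∈ Finset.range (n+1), θhat k ω * θhat k ω₁) -
          (∑ k ∈ Finset.range n, θhat k ω * θhat k ω₁) := by
        rw [Finset.sum_range_succ]; ring
      calc |θhat n ω| * |θhat n ω₁| = |θhat n ω * θhat n ω₁| := (abs_mul _ _).symm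
        _ = |(∑ k ∈ Finset.range (n+1), θhat k ω * θhat k ω₁) -
            (∑ k ∈ Finset.range n, θhat k ω * θhat k ω₁)| := by rw [← hdiff]
        _ ≤ _ := abs_sub _ _
    calc |θhat n ω| * (∫ ω₁ in Iπ, |θhat n ω₁|)
        = ∫ ω₁ in Iπ, |θhat n ω| * |θhat n ω₁| := (integral_const_mul _ _).symm
      _ ≤ ∫ ω₁ in Iπ, (|∑ k ∈ Finset.range (n+1), θhat k ω * θhat k ω₁| +
            |∑ k ∈ Finset.range n, θhat k ω * θhat k ω₁|) :=
          integral_mono ((hθint n).abs.const_mul _)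
            (((intK (n+1)).abs).add ((intK n).abs)) hpt
      _ = (∫ ω₁ in Iπ, |∑ k ∈ Finset.range (n+1), θhat k ω * θhat k ω₁|) +
          (∫ ω₁ in Iπ, |∑ k ∈ Finset.range n, θhat k ω * θhat k ω₁|) :=
          integral_add ((intK (n+1)).abs) ((intK n).abs)
      _ ≤ 2 * Real.pi * C₀ + 2 * Real.pi * C₀ := add_le_add (key1 _) (key1 _)
      _ = 4 * Real.pi * C₀ := by ring
  choose B hB0 hBle using hbd
  -- products with an integrable function are integrable
  have keyint : ∀ (G : ℝ → ℂ), IntegrableOn G Iσ → ∀ n,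
      Integrable (fun ω₁ => G ω₁ * (θhat n ω₁ : ℂ)) (volume.restrict Iσ) := by
    intro G hG n
    refine Integrable.mono' (hG.norm.const_mul (B n))
      (hG.aestronglyMeasurable.mul
        (Complex.continuous_ofReal.comp_aestronglyMeasurable (hθmσ n))) ?_
    filter_upwards [ae_restrict_mem measurableSet_Icc] with ω hω
    rw [norm_mul, Complex.norm_real, Real.norm_eq_abs]
    calc ‖G ω‖ * |θhat n ω| ≤ ‖G ω‖ * B n :=
        mul_le_mul_of_nonneg_left (hBle n ω hω) (norm_nonneg _)
      _ = B n * ‖G ω‖ := mul_comm _ _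
  -- main uniform estimate
  have key : ∀ (G : ℝ → ℂ), IntegrableOn G Iσ → ∀ N : ℕ,
      (1 / (2 * Real.pi)) *
          (∫ ω in Iπ,
            ‖∑ n ∈ Finset.range N,
                ((1 / (2 * Real.pi)) * ∫ ω₁ in Iσ, G ω₁ * (θhat n ω₁ : ℂ)) *
                  (θhat n ω : ℂ)‖) ≤
        C₀ * ((1 / (2 * Real.pi)) * ∫ ω in Iσ, ‖G ω‖) := by
    intro G hG N
    set K : ℝ → ℝ → ℝ := fun ω₁ ω => ∑ n ∈ Finset.range N, θhat n ω₁ * θhat n ω with hK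
    have hrep : ∀ ω : ℝ, (∑ n ∈ Finset.range N,
        ((1 / (2 * Real.pi)) * ∫ ω₁ in Iσ, G ω₁ * (θhat n ω₁ : ℂ)) * (θhat n ω : ℂ))
        = (1 / (2 * (Real.pi:ℂ))) * ∫ ω₁ in Iσ, G ω₁ * ((K ω₁ ω : ℝ) : ℂ) := by
      intro ω
      have h1 : (fun ω₁ => G ω₁ * ((K ω₁ ω : ℝ) : ℂ)) =
          fun ω₁ => ∑ n ∈ Finset.range N, (G ω₁ * (θhat n ω₁ : ℂ)) * (θhat n ω : ℂ) := by
        funext ω₁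
        show G ω₁ * ((∑ n ∈ Finset.range N, θhat n ω₁ * θhat n ω : ℝ) : ℂ) = _
        push_cast
        rw [Finset.mul_sum]
        exact Finset.sum_congr rfl fun n _ => by ring
      rw [h1, integral_finset_sum _ (fun n _ => (keyint G hG n).mul_const _), Finset.mul_sum]
      exact Finset.sum_congr rfl fun n _ => by rw [integral_mul_const]; ring
    have hnorm1 : ‖(1 / (2 * (Real.pi:ℂ)))‖ = 1 / (2 * Real.pi) := by
      rw [show (1 / (2 * (Real.pi:ℂ))) = ((1 / (2 * Real.pi) : ℝ) : ℂ) by push_cast; ring,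
        Complex.norm_real, Real.norm_eq_abs, abs_of_pos (by positivity)]
    have hpt : ∀ ω : ℝ, ‖∑ n ∈ Finset.range N,
        ((1 / (2 * Real.pi)) * ∫ ω₁ in Iσ, G ω₁ * (θhat n ω₁ : ℂ)) * (θhat n ω : ℂ)‖ ≤
        (1 / (2 * Real.pi)) * ∫ ω₁ in Iσ, ‖G ω₁‖ * |K ω₁ ω| := by
      intro ω
      rw [hrep ω, norm_mul, hnorm1]
      refine mul_le_mul_of_nonneg_left ?_ (by positivity)
      refine (norm_integral_le_integral_norm _).trans_eq ?_
      refine integral_congr_ae (Eventually.of_forall fun ω₁ => ?_)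
      simp only [norm_mul, Complex.norm_real, Real.norm_eq_abs]
    have hGθabs : ∀ n, Integrable (fun ω₁ => ‖G ω₁‖ * |θhat n ω₁|) (volume.restrict Iσ) := by
      intro n
      refine ((keyint G hG n).norm).congr (Eventually.of_forall fun ω₁ => ?_)
      simp only [norm_mul, Complex.norm_real, Real.norm_eq_abs]
    have hKm : AEStronglyMeasurable (fun p : ℝ × ℝ => ‖G p.1‖ * |K p.1 p.2|)
        ((volume.restrict Iσ).prod (volume.restrict Iπ)) := by
      refine AEStronglyMeasurable.mul (hG.norm.aestronglyMeasurable.comp_fst) ?_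
      have h2 : AEStronglyMeasurable (fun p : ℝ × ℝ => K p.1 p.2)
          ((volume.restrict Iσ).prod (volume.restrict Iπ)) :=
        Finset.aestronglyMeasurable_fun_sum _ (fun n _ => ((hθmσ n).comp_fst.mul ((hθm n).comp_snd)))
      exact h2.norm
    have hH : Integrable (fun p : ℝ × ℝ => ‖G p.1‖ * |K p.1 p.2|)
        ((volume.restrict Iσ).prod (volume.restrict Iπ)) := by
      refine Integrable.mono'
        (g := fun p : ℝ × ℝ => ∑ n ∈ Finset.range N, (‖G p.1‖ * |θhat n p.1|) * |θhat n p.2|)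
        ?_ hKm ?_
      · exact integrable_finset_sum _ fun n _ =>
          Integrable.mul_prod (hGθabs n) ((hθint n).abs)
      · refine Eventually.of_forall fun p => ?_
        rw [Real.norm_eq_abs, abs_mul, abs_of_nonneg (norm_nonneg _), abs_abs]
        calc ‖G p.1‖ * |K p.1 p.2|
            ≤ ‖G p.1‖ * ∑ n ∈ Finset.range N, |θhat n p.1| * |θhat n p.2| := by
              refine mul_le_mul_of_nonneg_left ?_ (norm_nonneg _)
              refine (Finset.abs_sum_le_sum_abs _ _).trans ?_
              exact Finset.sum_le_sum fun n _ => le_of_eq (abs_mul _ _)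
          _ = ∑ n ∈ Finset.range N, (‖G p.1‖ * |θhat n p.1|) * |θhat n p.2| := by
              rw [Finset.mul_sum]; exact Finset.sum_congr rfl fun n _ => by ring
    have int_u : Integrable (fun ω => ‖∑ n ∈ Finset.range N,
        ((1 / (2 * Real.pi)) * ∫ ω₁ in Iσ, G ω₁ * (θhat n ω₁ : ℂ)) * (θhat n ω : ℂ)‖)
        (volume.restrict Iπ) :=
      (integrable_finset_sum _ fun n _ => ((hθint n).ofReal.const_mul _)).norm
    have step1 : (∫ ω in Iπ, ‖∑ n ∈ Finset.range N,
        ((1 / (2 * Real.pi)) * ∫ ω₁ in Iσ, G ω₁ * (θhat n ω₁ : ℂ)) * (θhat n ω : ℂ)‖) ≤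
        ∫ ω in Iπ, (1 / (2 * Real.pi)) * ∫ ω₁ in Iσ, ‖G ω₁‖ * |K ω₁ ω| :=
      integral_mono int_u ((hH.integral_prod_right).const_mul _) hpt
    have step3 : (∫ ω in Iπ, ∫ ω₁ in Iσ, ‖G ω₁‖ * |K ω₁ ω|) =
        ∫ ω₁ in Iσ, ∫ ω in Iπ, ‖G ω₁‖ * |K ω₁ ω| :=
      (integral_integral_swap hH).symm
    have step4 : (∫ ω₁ in Iσ, ∫ ω in Iπ, ‖G ω₁‖ * |K ω₁ ω|) ≤
        ∫ ω₁ in Iσ, ‖G ω₁‖ * (2 * Real.pi * C₀) := by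
      refine setIntegral_mono_on (hH.integral_prod_left) (hG.norm.mul_const _)
        measurableSet_Icc ?_
      intro ω₁ hω₁
      rw [integral_const_mul]
      refine mul_le_mul_of_nonneg_left ?_ (norm_nonneg _)
      have h1 := hC₀ ω₁ hω₁ N
      calc (∫ ω in Iπ, |K ω₁ ω|)
          = (2 * Real.pi) * ((1 / (2 * Real.pi)) * ∫ ω in Iπ, |K ω₁ ω|) := by field_simp
        _ ≤ (2 * Real.pi) * C₀ := mul_le_mul_of_nonneg_left h1 h2π.le
        _ = 2 * Real.pi * C₀ := by ring
    have hInt0 : (0:ℝ) ≤ ∫ ω₁ in Iσ, ‖G ω₁‖ := integral_nonneg fun ω => norm_nonneg _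
    calc (1 / (2 * Real.pi)) * (∫ ω in Iπ, ‖∑ n ∈ Finset.range N,
        ((1 / (2 * Real.pi)) * ∫ ω₁ in Iσ, G ω₁ * (θhat n ω₁ : ℂ)) * (θhat n ω : ℂ)‖)
        ≤ (1 / (2 * Real.pi)) *
          ∫ ω in Iπ, (1 / (2 * Real.pi)) * ∫ ω₁ in Iσ, ‖G ω₁‖ * |K ω₁ ω| :=
          mul_le_mul_of_nonneg_left step1 (by positivity)
      _ = (1 / (2 * Real.pi)) * ((1 / (2 * Real.pi)) *
          ∫ ω₁ in Iσ, ∫ ω in Iπ, ‖G ω₁‖ * |K ω₁ ω|) := by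
          rw [integral_const_mul, step3]
      _ ≤ (1 / (2 * Real.pi)) * ((1 / (2 * Real.pi)) *
          ((∫ ω₁ in Iσ, ‖G ω₁‖) * (2 * Real.pi * C₀))) := by
          have h5 := step4
          rw [integral_mul_const] at h5
          exact mul_le_mul_of_nonneg_left
            (mul_le_mul_of_nonneg_left h5 (by positivity)) (by positivity)
      _ = C₀ * ((1 / (2 * Real.pi)) * ∫ ω in Iσ, ‖G ω‖) := by
          field_simp
  refine ⟨key fhat hf, ?_⟩
  -- Part (ii)
  set s2 : ℝ := Real.sqrt (2 * Real.pi) with hs2def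
  have hs2pos : 0 < s2 := Real.sqrt_pos.mpr h2π
  have hs2sq : s2 * s2 = 2 * Real.pi := Real.mul_self_sqrt h2π.le
  have hφ2 : ∀ n, MemLp (fun ω => ((s2⁻¹ * θhat n ω : ℝ) : ℂ)) 2 (volume.restrict Iπ) :=
    fun n => ((hθ2 n).const_mul _).ofReal
  set e : ℕ → Lp ℂ 2 (volume.restrict Iπ) := fun n => (hφ2 n).toLp _ with hedef
  have hecoe : ∀ n, ⇑(e n) =ᵐ[volume.restrict Iπ] fun ω => ((s2⁻¹ * θhat n ω : ℝ) : ℂ) :=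
    fun n => (hφ2 n).coeFn_toLp
  have hip : ∀ n, ∀ x : Lp ℂ 2 (volume.restrict Iπ),
      (inner ℂ (e n) x : ℂ) = ((s2⁻¹ : ℝ) : ℂ) * ∫ ω in Iπ, (θhat n ω : ℂ) * x ω := by
    intro n x
    rw [MeasureTheory.L2.inner_def, ← integral_const_mul]
    refine integral_congr_ae ?_
    filter_upwards [hecoe n] with ω hω
    rw [hω, RCLike.inner_apply, Complex.conj_ofReal]
    push_cast
    ring
  have honb : Orthonormal ℂ e := by
    rw [orthonormal_iff_ite]
    intro n m
    rw [hip n (e m)]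
    have h3 : (∫ ω in Iπ, (θhat n ω : ℂ) * (e m) ω)
        = ((s2⁻¹ * ∫ ω in Iπ, θhat n ω * θhat m ω : ℝ) : ℂ) := by
      calc (∫ ω in Iπ, (θhat n ω : ℂ) * (e m) ω)
          = ∫ ω in Iπ, ((s2⁻¹ * (θhat n ω * θhat m ω) : ℝ) : ℂ) := by
            refine integral_congr_ae ?_
            filter_upwards [hecoe m] with ω hω
            rw [hω]; push_cast; ring
        _ = ((∫ ω in Iπ, s2⁻¹ * (θhat n ω * θhat m ω) : ℝ) : ℂ) := integral_ofReal
        _ = ((s2⁻¹ * ∫ ω in Iπ, θhat n ω * θhat m ω : ℝ) : ℂ) := by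
            rw [integral_const_mul]
    rw [h3]
    have harith : (s2⁻¹ : ℝ) * (s2⁻¹ * ∫ ω in Iπ, θhat n ω * θhat m ω)
        = (1 / (2 * Real.pi)) * ∫ ω in Iπ, θhat n ω * θhat m ω := by
      have hne : s2 ≠ 0 := ne_of_gt hs2pos
      have h5 : (1:ℝ) / (2 * Real.pi) = s2⁻¹ * s2⁻¹ := by
        rw [← hs2sq]
        field_simp
      rw [h5]
      ring
    calc ((s2⁻¹ : ℝ) : ℂ) * ((s2⁻¹ * ∫ ω in Iπ, θhat n ω * θhat m ω : ℝ) : ℂ)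
        = ((s2⁻¹ * (s2⁻¹ * ∫ ω in Iπ, θhat n ω * θhat m ω) : ℝ) : ℂ) := by push_cast; ring
      _ = (((1 / (2 * Real.pi)) * ∫ ω in Iπ, θhat n ω * θhat m ω : ℝ) : ℂ) := by
          rw [harith]
      _ = if n = m then 1 else 0 := by
          rw [hortho n m]; split_ifs <;> norm_num
  have hspan : (Submodule.span ℂ (Set.range e))ᗮ = ⊥ := by
    rw [Submodule.eq_bot_iff]
    intro x hx
    have hzero : ∀ n, (∫ ω in Iπ, (x : ℝ → ℂ) ω * (θhat n ω : ℂ)) = 0 := by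
      intro n
      have h1 : (inner ℂ (e n) x : ℂ) = 0 :=
        (Submodule.mem_orthogonal _ x).mp hx (e n) (Submodule.subset_span ⟨n, rfl⟩)
      rw [hip n x] at h1
      have hs2ne : ((s2⁻¹ : ℝ) : ℂ) ≠ 0 := by
        simp only [ne_eq, Complex.ofReal_eq_zero, inv_eq_zero]
        exact ne_of_gt hs2pos
      have h2 : (∫ ω in Iπ, (θhat n ω : ℂ) * x ω) = 0 := by
        rcases mul_eq_zero.mp h1 with h | h
        · exact absurd h hs2ne
        · exact h
      rw [← h2]
      exact integral_congr_ae (Eventually.of_forall fun ω => mul_comm _ _)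
    have h3 := hcomplete (x : ℝ → ℂ) (Lp.memLp x) hzero
    exact Lp.eq_zero_iff_ae_eq_zero.mpr h3
  set b : HilbertBasis ℕ ℂ (Lp ℂ 2 (volume.restrict Iπ)) :=
    HilbertBasis.mkOfOrthogonalEqBot honb hspan with hbdef
  have hbcoe : ⇑b = e := HilbertBasis.coe_mkOfOrthogonalEqBot honb hspan
  have L2conv : ∀ g : ℝ → ℂ, MemLp g 2 (volume.restrict Iπ) → (∀ ω, ω ∉ Iσ → g ω = 0) →
      Tendsto (fun N : ℕ => (1 / (2 * Real.pi)) * ∫ ω in Iπ,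
        ‖g ω - ∑ n ∈ Finset.range N,
          ((1 / (2 * Real.pi)) * ∫ ω₁ in Iσ, g ω₁ * (θhat n ω₁ : ℂ)) * (θhat n ω : ℂ)‖)
        atTop (nhds 0) := by
    intro g hg hsupp
    set x : Lp ℂ 2 (volume.restrict Iπ) := hg.toLp g with hxdef
    have hcoeq : ∀ n, (∫ ω₁ in Iσ, g ω₁ * (θhat n ω₁ : ℂ))
        = ∫ ω₁ in Iπ, g ω₁ * (θhat n ω₁ : ℂ) := by
      intro n
      have h1 : ∀ ω₁ : ℝ, g ω₁ * (θhat n ω₁ : ℂ)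
          = Iσ.indicator (fun ω₁ => g ω₁ * (θhat n ω₁ : ℂ)) ω₁ := by
        intro ω₁
        by_cases hm : ω₁ ∈ Iσ
        · rw [Set.indicator_of_mem hm]
        · rw [Set.indicator_of_notMem hm, hsupp ω₁ hm, zero_mul]
      calc (∫ ω₁ in Iσ, g ω₁ * (θhat n ω₁ : ℂ))
          = ∫ ω₁ in Iπ ∩ Iσ, g ω₁ * (θhat n ω₁ : ℂ) := by
            rw [Set.inter_eq_self_of_subset_right hsub]
        _ = ∫ ω₁ in Iπ, Iσ.indicator (fun ω₁ => g ω₁ * (θhat n ω₁ : ℂ)) ω₁ :=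
            (setIntegral_indicator measurableSet_Icc).symm
        _ = ∫ ω₁ in Iπ, g ω₁ * (θhat n ω₁ : ℂ) :=
            integral_congr_ae (Eventually.of_forall fun ω₁ => (h1 ω₁).symm)
    have hipx : ∀ n, (inner ℂ (e n) x : ℂ)
        = ((s2⁻¹ : ℝ) : ℂ) * ∫ ω in Iπ, (θhat n ω : ℂ) * g ω := by
      intro n
      rw [hip n x]
      congr 1
      refine integral_congr_ae ?_
      filter_upwards [hg.coeFn_toLp] with ω h
      rw [h]
    have hss : ((s2 : ℝ) : ℂ)⁻¹ * ((s2 : ℝ) : ℂ)⁻¹ = 1 / (2 * (Real.pi : ℂ)) := by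
      have h5 : (s2⁻¹ : ℝ) * s2⁻¹ = 1 / (2 * Real.pi) := by
        rw [← hs2sq]
        field_simp
      calc ((s2 : ℝ) : ℂ)⁻¹ * ((s2 : ℝ) : ℂ)⁻¹ = ((s2⁻¹ * s2⁻¹ : ℝ) : ℂ) := by push_cast; ring
        _ = ((1 / (2 * Real.pi) : ℝ) : ℂ) := by rw [h5]
        _ = 1 / (2 * (Real.pi : ℂ)) := by push_cast; ring
    set S : ℕ → Lp ℂ 2 (volume.restrict Iπ) :=
      fun N => ∑ n ∈ Finset.range N, (inner ℂ (e n) x : ℂ) • e n with hSdef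
    have hxs : ∀ N : ℕ, ⇑(S N) =ᵐ[volume.restrict Iπ] fun ω => ∑ n ∈ Finset.range N,
        ((1 / (2 * Real.pi)) * ∫ ω₁ in Iσ, g ω₁ * (θhat n ω₁ : ℂ)) * (θhat n ω : ℂ) := by
      intro N
      refine coeFn_finset_sum_ae _ _ _ fun n _ => ?_
      filter_upwards [Lp.coeFn_smul ((inner ℂ (e n) x : ℂ)) (e n), hecoe n] with ω h1 h2
      rw [h1, Pi.smul_apply, h2, smul_eq_mul, hipx n, hcoeq n]
      have hmc : (∫ ω₁ in Iπ, g ω₁ * (θhat n ω₁ : ℂ))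
          = ∫ ω₁ in Iπ, (θhat n ω₁ : ℂ) * g ω₁ :=
        integral_congr_ae (Eventually.of_forall fun ω₁ => mul_comm _ _)
      rw [hmc]
      push_cast
      linear_combination (∫ ω₁ in Iπ, (θhat n ω₁ : ℂ) * g ω₁) * ((θhat n ω : ℂ)) * hss
    have hsum' : Tendsto S atTop (nhds x) := by
      have h6 := (b.hasSum_repr x).tendsto_sum_nat
      have h7 : ∀ i : ℕ, b i = e i := fun i => congrFun hbcoe i
      simp only [b.repr_apply_apply, h7] at h6
      exact h6
    have hSx : Tendsto (fun N : ℕ => ‖x - S N‖) atTop (nhds 0) := by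
      rw [tendsto_iff_norm_sub_tendsto_zero] at hsum'
      exact hsum'.congr fun N => norm_sub_rev _ _
    have hu2 : ∀ N : ℕ, MemLp (fun ω => ∑ n ∈ Finset.range N,
        ((1 / (2 * Real.pi)) * ∫ ω₁ in Iσ, g ω₁ * (θhat n ω₁ : ℂ)) * (θhat n ω : ℂ)) 2
        (volume.restrict Iπ) :=
      fun N => memLp_finset_sum _ fun n _ => ((hθ2 n).ofReal.const_mul _)
    have hbound : ∀ N : ℕ, (∫ ω in Iπ, ‖g ω - ∑ n ∈ Finset.range N,
        ((1 / (2 * Real.pi)) * ∫ ω₁ in Iσ, g ω₁ * (θhat n ω₁ : ℂ)) * (θhat n ω : ℂ)‖)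
        ≤ s2 * ‖x - S N‖ := by
      intro N
      set v : ℝ → ℂ := fun ω => g ω - ∑ n ∈ Finset.range N,
        ((1 / (2 * Real.pi)) * ∫ ω₁ in Iσ, g ω₁ * (θhat n ω₁ : ℂ)) * (θhat n ω : ℂ) with hvdef
      have hv2 : MemLp v 2 (volume.restrict Iπ) := hg.sub (hu2 N)
      have hv1 : Integrable v (volume.restrict Iπ) := hv2.integrable one_le_two
      have hvcoe : ⇑(x - S N) =ᵐ[volume.restrict Iπ] v := by
        filter_upwards [Lp.coeFn_sub x (S N), hg.coeFn_toLp, hxs N] with ω h1 h2 h3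
        rw [h1, Pi.sub_apply, h2, h3]
      have heq1 : (∫ ω in Iπ, ‖v ω‖) = (eLpNorm v 1 (volume.restrict Iπ)).toReal := by
        rw [integral_norm_eq_lintegral_enorm hv1.aestronglyMeasurable,
          eLpNorm_one_eq_lintegral_enorm]
      have huniv : (volume.restrict Iπ) Set.univ = ENNReal.ofReal (2 * Real.pi) := by
        rw [Measure.restrict_apply_univ, hIπdef, Real.volume_Icc]
        congr 1
        ring
      have hle : eLpNorm v 1 (volume.restrict Iπ) ≤
          eLpNorm v 2 (volume.restrict Iπ) * (ENNReal.ofReal (2 * Real.pi)) ^ ((1:ℝ)/2) := by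
        have h7 := eLpNorm_le_eLpNorm_mul_rpow_measure_univ (p := 1) (q := 2)
          one_le_two hv2.aestronglyMeasurable
        rw [huniv] at h7
        convert h7 using 3
        norm_num
      have hfin : eLpNorm v 2 (volume.restrict Iπ) ≠ ⊤ := hv2.2.ne
      have h8 : (eLpNorm v 1 (volume.restrict Iπ)).toReal ≤
          (eLpNorm v 2 (volume.restrict Iπ)).toReal *
            ((ENNReal.ofReal (2 * Real.pi)) ^ ((1:ℝ)/2)).toReal := by
        rw [← ENNReal.toReal_mul]
        refine ENNReal.toReal_mono ?_ hle
        exact ENNReal.mul_ne_top hfin (by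
          refine ENNReal.rpow_ne_top_of_nonneg (by norm_num) ENNReal.ofReal_ne_top)
      have h9 : ((ENNReal.ofReal (2 * Real.pi)) ^ ((1:ℝ)/2)).toReal = s2 := by
        rw [← ENNReal.toReal_rpow, ENNReal.toReal_ofReal h2π.le, hs2def, Real.sqrt_eq_rpow]
      have h10 : ‖x - S N‖ = (eLpNorm v 2 (volume.restrict Iπ)).toReal := by
        rw [Lp.norm_def, eLpNorm_congr_ae hvcoe]
      calc (∫ ω in Iπ, ‖v ω‖) = (eLpNorm v 1 (volume.restrict Iπ)).toReal := heq1
        _ ≤ (eLpNorm v 2 (volume.restrict Iπ)).toReal *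
            ((ENNReal.ofReal (2 * Real.pi)) ^ ((1:ℝ)/2)).toReal := h8
        _ = s2 * ‖x - S N‖ := by rw [h9, h10]; ring
    have hval : Tendsto (fun N : ℕ => ∫ ω in Iπ, ‖g ω - ∑ n ∈ Finset.range N,
        ((1 / (2 * Real.pi)) * ∫ ω₁ in Iσ, g ω₁ * (θhat n ω₁ : ℂ)) * (θhat n ω : ℂ)‖)
        atTop (nhds 0) := by
      refine tendsto_of_tendsto_of_tendsto_of_le_of_le (g := fun _ : ℕ => (0:ℝ))
        (h := fun N => s2 * ‖x - S N‖) tendsto_const_nhds ?_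
        (fun N => integral_nonneg fun ω => norm_nonneg _) hbound
      have := hSx.const_mul s2
      simpa using this
    have := hval.const_mul (1 / (2 * Real.pi))
    simpa using this
  -- measurable representative of fhat, cut off outside Iσ
  have hfm := hf.aestronglyMeasurable
  set fhat' : ℝ → ℂ := hfm.mk fhat with hf'def
  have hf'sm : StronglyMeasurable fhat' := hfm.stronglyMeasurable_mk
  have hfae : fhat =ᵐ[volume.restrict Iσ] fhat' := hfm.ae_eq_mk
  set F' : ℝ → ℂ := Iσ.indicator fhat' with hF'def
  have hF'sm : StronglyMeasurable F' := hf'sm.indicator measurableSet_Icc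
  have hFF' : (fun ω => if ω ∈ Iσ then fhat ω else 0) =ᵐ[volume.restrict Iπ] F' := by
    have h1 : ∀ᵐ ω ∂volume, ω ∈ Iσ → fhat ω = fhat' ω :=
      (ae_restrict_iff' measurableSet_Icc).mp hfae
    have h2 : ∀ᵐ ω ∂(volume.restrict Iπ), ω ∈ Iσ → fhat ω = fhat' ω :=
      h1.filter_mono (ae_mono Measure.restrict_le_self)
    filter_upwards [h2] with ω hω
    by_cases hmem : ω ∈ Iσ
    · rw [if_pos hmem, hF'def, Set.indicator_of_mem hmem]
      exact hω hmem
    · rw [if_neg hmem, hF'def, Set.indicator_of_notMem hmem]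
  have hfaeσ : fhat =ᵐ[volume.restrict Iσ] F' := by
    filter_upwards [hfae, ae_restrict_mem measurableSet_Icc] with ω h1 h2
    rw [h1, hF'def, Set.indicator_of_mem h2]
  have hF'int : IntegrableOn F' Iσ := hf.congr hfaeσ
  have hF'supp : ∀ ω, ω ∉ Iσ → F' ω = 0 := by
    intro ω hω
    rw [hF'def, Set.indicator_of_notMem hω]
  -- truncations
  set gM : ℕ → ℝ → ℂ := fun M ω => if ‖F' ω‖ ≤ (M:ℝ) then F' ω else 0 with hgMdef
  have hgMsm : ∀ M, StronglyMeasurable (gM M) := by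
    intro M
    have hset : MeasurableSet {ω : ℝ | ‖F' ω‖ ≤ (M:ℝ)} :=
      measurableSet_le hF'sm.measurable.norm measurable_const
    have h1 : gM M = Set.indicator {ω : ℝ | ‖F' ω‖ ≤ (M:ℝ)} F' := by
      funext ω
      rw [hgMdef]
      by_cases h : ‖F' ω‖ ≤ (M:ℝ) <;> simp [Set.indicator, h]
    rw [h1]
    exact hF'sm.indicator hset
  have hgM2 : ∀ M, MemLp (gM M) 2 (volume.restrict Iπ) := by
    intro M
    refine MemLp.of_bound (hgMsm M).aestronglyMeasurable (M:ℝ)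
      (Eventually.of_forall fun ω => ?_)
    simp only [hgMdef]
    by_cases h : ‖F' ω‖ ≤ (M:ℝ)
    · rw [if_pos h]; exact h
    · rw [if_neg h]; simpa using (Nat.cast_nonneg M : (0:ℝ) ≤ M)
  have hgMsupp : ∀ M, ∀ ω, ω ∉ Iσ → gM M ω = 0 := by
    intro M ω hω
    simp only [hgMdef]
    rw [hF'supp ω hω, if_pos (by simp)]
  have hgMintσ : ∀ M, IntegrableOn (gM M) Iσ :=
    fun M => ((hgM2 M).integrable one_le_two).mono_measure hμle
  -- truncation error tends to 0
  have hDtend : Tendsto (fun M : ℕ => ∫ ω in Iσ, ‖F' ω - gM M ω‖) atTop (nhds 0) := by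
    have h1 := tendsto_integral_of_dominated_convergence (μ := volume.restrict Iσ)
      (F := fun M ω => ‖F' ω - gM M ω‖) (f := fun _ => (0:ℝ)) (fun ω => ‖F' ω‖)
      (fun M => ((hF'sm.sub (hgMsm M)).norm).aestronglyMeasurable)
      hF'int.norm
      (fun M => Eventually.of_forall fun ω => by
        rw [Real.norm_eq_abs, abs_of_nonneg (norm_nonneg _)]
        simp only [hgMdef]
        by_cases h : ‖F' ω‖ ≤ (M:ℝ)
        · rw [if_pos h]
          simpa using norm_nonneg (F' ω)
        · rw [if_neg h, sub_zero])
      (Eventually.of_forall fun ω => by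
        refine tendsto_atTop_of_eventually_const (i₀ := ⌈‖F' ω‖⌉₊) fun M hM => ?_
        have h : ‖F' ω‖ ≤ (M:ℝ) := le_trans (Nat.le_ceil _) (by exact_mod_cast hM)
        simp only [hgMdef]
        rw [if_pos h, sub_self, norm_zero])
    have h2 : (∫ (_ : ℝ) in Iσ, (0:ℝ)) = 0 := integral_zero _ _
    rwa [h2] at h1
  -- integrability facts
  have hFint : Integrable (fun ω => if ω ∈ Iσ then fhat ω else 0) (volume.restrict Iπ) := by
    have h1 : Integrable F' (volume.restrict Iπ) := by
      rw [hF'def, integrable_indicator_iff measurableSet_Icc]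
      have h2 : (volume.restrict Iπ).restrict Iσ = volume.restrict Iσ := by
        rw [Measure.restrict_restrict measurableSet_Icc,
          Set.inter_eq_self_of_subset_left hsub]
      rw [IntegrableOn, h2]
      exact hf.congr hfae
    exact h1.congr hFF'.symm
  have hintu : ∀ (c : ℕ → ℂ) (N : ℕ),
      Integrable (fun ω => ∑ n ∈ Finset.range N, c n * (θhat n ω : ℂ)) (volume.restrict Iπ) :=
    fun c N => integrable_finset_sum _ fun n _ => ((hθint n).ofReal.const_mul _)
  -- support transfer for integrals of functions vanishing off Iσ
  have hsupptrans : ∀ h : ℝ → ℂ, (∀ ω, ω ∉ Iσ → h ω = 0) →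
      (∫ ω in Iπ, ‖h ω‖) = ∫ ω in Iσ, ‖h ω‖ := by
    intro h hsupp
    have h1 : ∀ ω : ℝ, ‖h ω‖ = Iσ.indicator (fun ω => ‖h ω‖) ω := by
      intro ω
      by_cases hm : ω ∈ Iσ
      · rw [Set.indicator_of_mem hm]
      · rw [Set.indicator_of_notMem hm, hsupp ω hm, norm_zero]
    calc (∫ ω in Iπ, ‖h ω‖)
        = ∫ ω in Iπ, Iσ.indicator (fun ω => ‖h ω‖) ω :=
          integral_congr_ae (Eventually.of_forall fun ω => h1 ω)
      _ = ∫ ω in Iπ ∩ Iσ, ‖h ω‖ := setIntegral_indicator measurableSet_Icc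
      _ = ∫ ω in Iσ, ‖h ω‖ := by rw [Set.inter_eq_self_of_subset_right hsub]
  -- the ε argument
  rw [Metric.tendsto_atTop]
  intro ε hε
  have hC2 : (0:ℝ) < C₀ + 2 := by linarith
  have hεM : (0:ℝ) < ε / (2 * (C₀ + 2)) := by positivity
  obtain ⟨M, hM⟩ : ∃ M : ℕ,
      (1 / (2 * Real.pi)) * (∫ ω in Iσ, ‖F' ω - gM M ω‖) < ε / (2 * (C₀ + 2)) := by
    have h1 := hDtend.const_mul (1 / (2 * Real.pi))
    rw [mul_zero] at h1
    exact (h1.eventually (gt_mem_nhds hεM)).exists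
  obtain ⟨N₀, hN₀⟩ := Filter.eventually_atTop.mp
    ((L2conv (gM M) (hgM2 M) (hgMsupp M)).eventually (gt_mem_nhds (half_pos hε)))
  refine ⟨N₀, fun N hN => ?_⟩
  set c1 : ℕ → ℂ := fun n => ((1 / (2 * Real.pi)) * ∫ ω₁ in Iσ, fhat ω₁ * (θhat n ω₁ : ℂ) : ℂ)
    with hc1def
  set c2 : ℕ → ℂ := fun n => ((1 / (2 * Real.pi)) * ∫ ω₁ in Iσ, gM M ω₁ * (θhat n ω₁ : ℂ) : ℂ)
    with hc2def
  -- coefficient difference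
  have hcdiff : ∀ n, c2 n - c1 n
      = (1 / (2 * (Real.pi:ℂ))) * ∫ ω₁ in Iσ, (gM M ω₁ - fhat ω₁) * (θhat n ω₁ : ℂ) := by
    intro n
    rw [hc1def, hc2def]
    have h1 : (∫ ω₁ in Iσ, (gM M ω₁ - fhat ω₁) * (θhat n ω₁ : ℂ))
        = (∫ ω₁ in Iσ, gM M ω₁ * (θhat n ω₁ : ℂ)) - ∫ ω₁ in Iσ, fhat ω₁ * (θhat n ω₁ : ℂ) := by
      rw [← integral_sub (keyint (gM M) (hgMintσ M) n) (keyint fhat hf n)]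
      refine integral_congr_ae (Eventually.of_forall fun ω₁ => ?_)
      ring
    rw [h1]
    ring
  -- the three-term bound
  have hsplit : ∀ ω : ℝ, ‖(if ω ∈ Iσ then fhat ω else 0) -
        ∑ n ∈ Finset.range N, c1 n * (θhat n ω : ℂ)‖ ≤
      ‖(if ω ∈ Iσ then fhat ω else 0) - gM M ω‖ +
      (‖gM M ω - ∑ n ∈ Finset.range N, c2 n * (θhat n ω : ℂ)‖ +
       ‖∑ n ∈ Finset.range N, (c2 n - c1 n) * (θhat n ω : ℂ)‖) := by
    intro ω
    have hdec : (if ω ∈ Iσ then fhat ω else 0) - ∑ n ∈ Finset.range N, c1 n * (θhat n ω : ℂ)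
        = ((if ω ∈ Iσ then fhat ω else 0) - gM M ω) +
          ((gM M ω - ∑ n ∈ Finset.range N, c2 n * (θhat n ω : ℂ)) +
           (∑ n ∈ Finset.range N, (c2 n - c1 n) * (θhat n ω : ℂ))) := by
      have hsum : (∑ n ∈ Finset.range N, (c2 n - c1 n) * (θhat n ω : ℂ))
          = (∑ n ∈ Finset.range N, c2 n * (θhat n ω : ℂ)) -
            ∑ n ∈ Finset.range N, c1 n * (θhat n ω : ℂ) := by
        rw [← Finset.sum_sub_distrib]
        exact Finset.sum_congr rfl fun n _ => by ring
      rw [hsum]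
      ring
    rw [hdec]
    exact (norm_add_le _ _).trans (by gcongr; exact norm_add_le _ _)
  -- integrability of all pieces
  have hintgM : Integrable (gM M) (volume.restrict Iπ) := (hgM2 M).integrable one_le_two
  have hint1 : Integrable (fun ω => ‖(if ω ∈ Iσ then fhat ω else 0) - gM M ω‖)
      (volume.restrict Iπ) := (hFint.sub hintgM).norm
  have hint2 : Integrable
      (fun ω => ‖gM M ω - ∑ n ∈ Finset.range N, c2 n * (θhat n ω : ℂ)‖)
      (volume.restrict Iπ) := (hintgM.sub (hintu c2 N)).norm
  have hint3 : Integrable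
      (fun ω => ‖∑ n ∈ Finset.range N, (c2 n - c1 n) * (θhat n ω : ℂ)‖)
      (volume.restrict Iπ) := (hintu (fun n => c2 n - c1 n) N).norm
  have hintL : Integrable
      (fun ω => ‖(if ω ∈ Iσ then fhat ω else 0) -
        ∑ n ∈ Finset.range N, c1 n * (θhat n ω : ℂ)‖) (volume.restrict Iπ) :=
    (hFint.sub (hintu c1 N)).norm
  have hstep : (∫ ω in Iπ, ‖(if ω ∈ Iσ then fhat ω else 0) -
        ∑ n ∈ Finset.range N, c1 n * (θhat n ω : ℂ)‖) ≤
      (∫ ω in Iπ, ‖(if ω ∈ Iσ then fhat ω else 0) - gM M ω‖) +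
      ((∫ ω in Iπ, ‖gM M ω - ∑ n ∈ Finset.range N, c2 n * (θhat n ω : ℂ)‖) +
       ∫ ω in Iπ, ‖∑ n ∈ Finset.range N, (c2 n - c1 n) * (θhat n ω : ℂ)‖) := by
    calc (∫ ω in Iπ, ‖(if ω ∈ Iσ then fhat ω else 0) -
          ∑ n ∈ Finset.range N, c1 n * (θhat n ω : ℂ)‖)
        ≤ ∫ ω in Iπ, (‖(if ω ∈ Iσ then fhat ω else 0) - gM M ω‖ +
          (‖gM M ω - ∑ n ∈ Finset.range N, c2 n * (θhat n ω : ℂ)‖ +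
           ‖∑ n ∈ Finset.range N, (c2 n - c1 n) * (θhat n ω : ℂ)‖)) :=
          integral_mono hintL (hint1.add (hint2.add hint3)) hsplit
      _ = _ := by
          have i23 : Integrable (fun ω =>
              ‖gM M ω - ∑ n ∈ Finset.range N, c2 n * (θhat n ω : ℂ)‖ +
              ‖∑ n ∈ Finset.range N, (c2 n - c1 n) * (θhat n ω : ℂ)‖)
              (volume.restrict Iπ) := hint2.add hint3
          rw [integral_add hint1 i23, integral_add hint2 hint3]
  have ht1 : (∫ ω in Iπ, ‖(if ω ∈ Iσ then fhat ω else 0) - gM M ω‖)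
      = ∫ ω in Iσ, ‖F' ω - gM M ω‖ := by
    have h1 : (fun ω => ‖(if ω ∈ Iσ then fhat ω else 0) - gM M ω‖)
        =ᵐ[volume.restrict Iπ] fun ω => ‖F' ω - gM M ω‖ := by
      filter_upwards [hFF'] with ω h
      rw [h]
    rw [integral_congr_ae h1]
    exact hsupptrans _ fun ω hω => by rw [hF'supp ω hω, hgMsupp M ω hω, sub_zero]
  have hkey3 := key (fun ω => gM M ω - fhat ω) ((hgMintσ M).sub hf) N
  have ht3 : (1 / (2 * Real.pi)) *
      (∫ ω in Iπ, ‖∑ n ∈ Finset.range N, (c2 n - c1 n) * (θhat n ω : ℂ)‖) ≤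
      C₀ * ((1 / (2 * Real.pi)) * ∫ ω in Iσ, ‖gM M ω - fhat ω‖) := by
    simp only [← hcdiff] at hkey3
    exact hkey3
  have ht3' : (∫ ω in Iσ, ‖gM M ω - fhat ω‖) = ∫ ω in Iσ, ‖F' ω - gM M ω‖ := by
    refine integral_congr_ae ?_
    filter_upwards [hfaeσ] with ω h
    rw [h, norm_sub_rev]
  have ht2 := hN₀ N hN
  have ha1nn : 0 ≤ (1 / (2 * Real.pi)) * ∫ ω in Iσ, ‖F' ω - gM M ω‖ :=
    mul_nonneg (by positivity) (integral_nonneg fun ω => norm_nonneg _)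
  have hA0 : 0 ≤ (1 / (2 * Real.pi)) * ∫ ω in Iπ, ‖(if ω ∈ Iσ then fhat ω else 0) -
      ∑ n ∈ Finset.range N, c1 n * (θhat n ω : ℂ)‖ :=
    mul_nonneg (by positivity) (integral_nonneg fun ω => norm_nonneg _)
  rw [Real.dist_eq, sub_zero, abs_of_nonneg hA0]
  have hd' : ((1 / (2 * Real.pi)) * ∫ ω in Iσ, ‖F' ω - gM M ω‖) * (C₀ + 2) < ε / 2 := by
    have h1 : ε / (2 * (C₀ + 2)) = (ε / 2) / (C₀ + 2) := by
      field_simp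
    rw [h1] at hM
    exact (lt_div_iff₀ hC2).mp hM
  calc (1 / (2 * Real.pi)) * ∫ ω in Iπ, ‖(if ω ∈ Iσ then fhat ω else 0) -
        ∑ n ∈ Finset.range N, c1 n * (θhat n ω : ℂ)‖
      ≤ (1 / (2 * Real.pi)) *
        ((∫ ω in Iπ, ‖(if ω ∈ Iσ then fhat ω else 0) - gM M ω‖) +
        ((∫ ω in Iπ, ‖gM M ω - ∑ n ∈ Finset.range N, c2 n * (θhat n ω : ℂ)‖) +
         ∫ ω in Iπ, ‖∑ n ∈ Finset.range N, (c2 n - c1 n) * (θhat n ω : ℂ)‖)) :=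
        mul_le_mul_of_nonneg_left hstep (by positivity)
    _ = (1 / (2 * Real.pi)) * (∫ ω in Iσ, ‖F' ω - gM M ω‖) +
        ((1 / (2 * Real.pi)) *
          (∫ ω in Iπ, ‖gM M ω - ∑ n ∈ Finset.range N, c2 n * (θhat n ω : ℂ)‖) +
         (1 / (2 * Real.pi)) *
          ∫ ω in Iπ, ‖∑ n ∈ Finset.range N, (c2 n - c1 n) * (θhat n ω : ℂ)‖) := by
        rw [ht1]; ring
    _ ≤ (1 / (2 * Real.pi)) * (∫ ω in Iσ, ‖F' ω - gM M ω‖) +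
        (ε / 2 + C₀ * ((1 / (2 * Real.pi)) * (∫ ω in Iσ, ‖F' ω - gM M ω‖))) := by
        refine add_le_add_right (add_le_add ht2.le ?_) _
        calc (1 / (2 * Real.pi)) *
            (∫ ω in Iπ, ‖∑ n ∈ Finset.range N, (c2 n - c1 n) * (θhat n ω : ℂ)‖)
            ≤ C₀ * ((1 / (2 * Real.pi)) * ∫ ω in Iσ, ‖gM M ω - fhat ω‖) := ht3
          _ = C₀ * ((1 / (2 * Real.pi)) * ∫ ω in Iσ, ‖F' ω - gM M ω‖) := by rw [ht3']
    _ < ε := by nlinarith [hd', ha1nn, hC₀0]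
end

section
/- For every strictly increasing sequence {M_N}_{N∈ℕ} of natural numbers there exist a signal f_* ∈ PW¹_π and ĥ_* ∈ L^∞[−π,π] (defining a stable LTI system T_* : PW¹_π → PW¹_π) such that limsup_{N→∞} sup_{t∈ℝ} | (T_* f_*)(t) − Σ_{k=−M_N}^{M_N} f_*(k) (T_* sinc(· − k))(t) | = ∞, where sinc(t) = sin(πt)/(πt) and (T_* sinc(· − k))(t) = (1/(2π)) ∫_{−π}^{π} ĥ_*(ω) e^{−iωk} e^{iωt} dω. -/
open MeasureTheory Filter Finset

noncomputable section Stmt16Aux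

namespace Stmt16
def tN (M : ℕ → ℕ) (N : ℕ) : ℝ := (M N : ℝ) + 1/2
def aN (M : ℕ → ℕ) (N : ℕ) (k : ℤ) : ℝ := tN M N - k
def ccR (M : ℕ → ℕ) (N : ℕ) (k : ℤ) : ℝ :=
  Real.sin (Real.pi * aN M N k) / (Real.pi * aN M N k)

lemma aN_ne (M : ℕ → ℕ) (N : ℕ) (k : ℤ) : aN M N k ≠ 0 := by
  intro h
  have : (k : ℝ) = (M N : ℝ) + 1/2 := by
    unfold aN tN at h; linarith
  have h2 : ((2 * k : ℤ) : ℝ) = ((2 * (M N : ℤ) + 1 : ℤ) : ℝ) := by push_cast; linarith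
  have := Int.cast_injective h2
  omega

lemma intK (a : ℝ) (ha : a ≠ 0) :
    ∫ ω in Set.Icc (-Real.pi) Real.pi, Complex.exp (Complex.I * ω * a)
      = ((2 * Real.sin (Real.pi * a) / a : ℝ) : ℂ) := by
  have h1 : ∀ ω : ℝ, Complex.I * ω * a = (Complex.I * a) * ω := by intro ω; ring
  have hc : (Complex.I * a : ℂ) ≠ 0 := by
    simp [Complex.ext_iff, ha, Complex.I_ne_zero]
  have ha' : (a : ℂ) ≠ 0 := Complex.ofReal_ne_zero.2 ha
  rw [MeasureTheory.integral_Icc_eq_integral_Ioc,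
    ← intervalIntegral.integral_of_le (by linarith [Real.pi_pos] : -Real.pi ≤ Real.pi)]
  simp_rw [h1]
  rw [integral_exp_mul_complex hc]
  push_cast
  rw [div_eq_iff hc, Complex.sin]
  ring_nf
  rw [Complex.I_sq]
  field_simp
  ring

lemma sinc_term (M : ℕ → ℕ) (N : ℕ) (k : ℤ) :
    ((1 : ℂ) / (2 * Real.pi)) *
        ∫ ω in Set.Icc (-Real.pi) Real.pi,
          (1 : ℂ) * Complex.exp (-(Complex.I * ω * (k : ℝ))) *
            Complex.exp (Complex.I * ω * tN M N)
      = (ccR M N k : ℂ) := by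
  have h1 : ∀ ω : ℝ, (1 : ℂ) * Complex.exp (-(Complex.I * ω * (k : ℝ))) *
      Complex.exp (Complex.I * ω * tN M N) = Complex.exp (Complex.I * ω * (aN M N k : ℝ)) := by
    intro ω
    rw [one_mul, ← Complex.exp_add]
    congr 1
    unfold aN
    push_cast
    ring
  simp_rw [h1]
  rw [intK _ (aN_ne M N k)]
  have ha : ((aN M N k : ℝ) : ℂ) ≠ 0 := Complex.ofReal_ne_zero.2 (aN_ne M N k)
  have hπ : ((Real.pi : ℝ) : ℂ) ≠ 0 := Complex.ofReal_ne_zero.2 Real.pi_ne_zero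
  unfold ccR
  push_cast
  field_simp

def Kf (M : ℕ → ℕ) (N : ℕ) (ω : ℝ) : ℂ :=
  Complex.exp (Complex.I * ω * tN M N) -
    ∑ k ∈ Finset.Icc (-(M N : ℤ)) (M N : ℤ),
      Complex.exp (Complex.I * ω * (k : ℝ)) * (ccR M N k : ℂ)

lemma cont_exp_aux (c : ℝ) : Continuous fun ω : ℝ => Complex.exp (Complex.I * ω * c) := by
  fun_prop

lemma Kf_continuous (M : ℕ → ℕ) (N : ℕ) : Continuous (Kf M N) := by
  unfold Kf
  exact (cont_exp_aux _).sub (continuous_finset_sum _ fun k _ => (cont_exp_aux _).mul continuous_const)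

lemma norm_exp_aux (c ω : ℝ) : ‖Complex.exp (Complex.I * ω * c)‖ = 1 := by
  rw [show Complex.I * ω * c = ((ω * c : ℝ) : ℂ) * Complex.I by push_cast; ring]
  exact Complex.norm_exp_ofReal_mul_I _

lemma Kf_bound (M : ℕ → ℕ) (N : ℕ) :
    ∀ ω : ℝ, ‖Kf M N ω‖ ≤ 1 + ∑ k ∈ Finset.Icc (-(M N : ℤ)) (M N : ℤ), ‖(ccR M N k : ℂ)‖ := by
  intro ω
  unfold Kf
  refine (norm_sub_le _ _).trans ?_
  gcongr
  · exact le_of_eq (norm_exp_aux _ _)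
  refine (norm_sum_le _ _).trans ?_
  refine Finset.sum_le_sum fun k _ => ?_
  rw [norm_mul, norm_exp_aux, one_mul]

lemma key_term (M : ℕ → ℕ) (N : ℕ) (k : ℤ) :
    Complex.exp (Complex.I * (Real.pi : ℝ) * (k : ℝ)) * (ccR M N k : ℂ)
      = (-1 : ℂ) ^ (M N) * ((1 / (Real.pi * aN M N k) : ℝ) : ℂ) := by
  have e1 : Complex.exp (Complex.I * (Real.pi : ℝ) * (k : ℝ)) = (-1 : ℂ) ^ k := by
    rw [show Complex.I * (Real.pi : ℝ) * (k : ℝ) = (k : ℂ) * ((Real.pi : ℝ) * Complex.I) by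
      push_cast; ring, Complex.exp_int_mul, Complex.exp_pi_mul_I]
  have e2 : ccR M N k = (-1 : ℝ) ^ ((M N : ℤ) - k) / (Real.pi * aN M N k) := by
    unfold ccR
    congr 1
    rw [show Real.pi * aN M N k = Real.pi / 2 + (((M N : ℤ) - k : ℤ) : ℝ) * Real.pi by
      unfold aN tN; push_cast; ring, Real.sin_add_int_mul_pi, Real.sin_pi_div_two, mul_one]
  rw [e1, e2]
  have e3 : ((-1 : ℂ) ^ k) * (-1 : ℂ) ^ ((M N : ℤ) - k) = (-1 : ℂ) ^ (M N) := by
    rw [← zpow_add₀ (by norm_num : (-1 : ℂ) ≠ 0)]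
    rw [show k + ((M N : ℤ) - k) = (M N : ℤ) by ring, zpow_natCast]
  push_cast
  rw [← e3]
  ring

lemma key_sum (M : ℕ → ℕ) (N : ℕ) :
    ∑ k ∈ Finset.Icc (-(M N : ℤ)) (M N : ℤ),
        Complex.exp (Complex.I * (Real.pi : ℝ) * (k : ℝ)) * (ccR M N k : ℂ)
      = (-1 : ℂ) ^ (M N) *
        ((∑ k ∈ Finset.Icc (-(M N : ℤ)) (M N : ℤ), 1 / (Real.pi * aN M N k) : ℝ) : ℂ) := by
  rw [Complex.ofReal_sum, Finset.mul_sum]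
  exact Finset.sum_congr rfl fun k _ => key_term M N k

lemma icc_eq_map (m : ℕ) :
    Finset.Icc (-(m : ℤ)) (m : ℤ)
      = (Finset.range (2 * m + 1)).map
          ⟨fun j : ℕ => (m : ℤ) - (j : ℤ), by intro a b h; simpa using h⟩ := by
  ext a
  simp only [Finset.mem_Icc, Finset.mem_map, Finset.mem_range, Function.Embedding.coeFn_mk]
  constructor
  · intro h
    exact ⟨(m - a).toNat, by omega, show (m : ℤ) - (((m - a).toNat : ℕ) : ℤ) = a by omega⟩
  · rintro ⟨j, hj, rfl⟩
    show -(m : ℤ) ≤ (m : ℤ) - (j : ℤ) ∧ (m : ℤ) - (j : ℤ) ≤ m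
    omega

lemma sum_lower (M : ℕ → ℕ) (N : ℕ) :
    (∑ j ∈ Finset.range (2 * M N + 1), 1 / ((j : ℝ) + 1)) / Real.pi
      ≤ ∑ k ∈ Finset.Icc (-(M N : ℤ)) (M N : ℤ), 1 / (Real.pi * aN M N k) := by
  rw [icc_eq_map (M N), Finset.sum_map]
  show (∑ j ∈ Finset.range (2 * M N + 1), 1 / ((j : ℝ) + 1)) / Real.pi
    ≤ ∑ j ∈ Finset.range (2 * M N + 1), 1 / (Real.pi * aN M N ((M N : ℤ) - (j : ℤ)))
  rw [Finset.sum_div]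
  refine Finset.sum_le_sum fun j _ => ?_
  have ha : aN M N ((M N : ℤ) - j) = (j : ℝ) + 1/2 := by
    unfold aN tN; push_cast; ring
  rw [ha, div_div]
  rw [div_le_div_iff₀ (by positivity) (by positivity)]
  have := Real.pi_pos
  nlinarith [Real.pi_pos]

lemma Kf_pi_lower (M : ℕ → ℕ) (N : ℕ) :
    (∑ j ∈ Finset.range (2 * M N + 1), 1 / ((j : ℝ) + 1)) / Real.pi - 1
      ≤ ‖Kf M N Real.pi‖ := by
  have h1 : ‖Kf M N Real.pi‖ ≥
      ‖∑ k ∈ Finset.Icc (-(M N : ℤ)) (M N : ℤ),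
        Complex.exp (Complex.I * (Real.pi : ℝ) * (k : ℝ)) * (ccR M N k : ℂ)‖ -
      ‖Complex.exp (Complex.I * (Real.pi : ℝ) * tN M N)‖ := by
    unfold Kf
    have h0 := norm_sub_norm_le
      (∑ k ∈ Finset.Icc (-(M N : ℤ)) (M N : ℤ),
        Complex.exp (Complex.I * (Real.pi : ℝ) * (k : ℝ)) * (ccR M N k : ℂ))
      (Complex.exp (Complex.I * (Real.pi : ℝ) * tN M N))
    rw [norm_sub_rev] at h0
    linarith
  rw [key_sum, norm_exp_aux] at h1
  rw [norm_mul, norm_pow, norm_neg, norm_one, one_pow, one_mul, Complex.norm_real] at h1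
  have h2 := sum_lower M N
  have h3 : ∑ k ∈ Finset.Icc (-(M N : ℤ)) (M N : ℤ), 1 / (Real.pi * aN M N k) ≤
      |∑ k ∈ Finset.Icc (-(M N : ℤ)) (M N : ℤ), 1 / (Real.pi * aN M N k)| := le_abs_self _
  rw [Real.norm_eq_abs] at h1
  linarith

abbrev μπ : Measure ℝ := volume.restrict (Set.Icc (-Real.pi) Real.pi)

lemma integrable_mul_Kf (M : ℕ → ℕ) (N : ℕ) {g : ℝ → ℂ} (hg : Integrable g μπ) :
    Integrable (fun ω => g ω * Kf M N ω) μπ := by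
  have := hg.bdd_mul ((Kf_continuous M N).aestronglyMeasurable)
    (Filter.Eventually.of_forall (Kf_bound M N))
  simpa [mul_comm] using this

def φ (M : ℕ → ℕ) (N : ℕ) : Lp ℂ 1 μπ →L[ℂ] ℂ :=
  LinearMap.mkContinuous
    { toFun := fun g => ∫ ω, g ω * Kf M N ω ∂μπ
      map_add' := by
        intro g h
        have h1 : ∀ᵐ ω ∂μπ, (↑(g + h) : ℝ → ℂ) ω * Kf M N ω
            = g ω * Kf M N ω + h ω * Kf M N ω := by
          filter_upwards [Lp.coeFn_add g h] with ω hω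
          rw [hω]; simp [add_mul]
        show (∫ ω, (↑(g + h) : ℝ → ℂ) ω * Kf M N ω ∂μπ) = _
        rw [integral_congr_ae h1, integral_add
          (integrable_mul_Kf M N (L1.integrable_coeFn g))
          (integrable_mul_Kf M N (L1.integrable_coeFn h))]
      map_smul' := by
        intro c g
        have h1 : ∀ᵐ ω ∂μπ, (↑(c • g) : ℝ → ℂ) ω * Kf M N ω
            = c * (g ω * Kf M N ω) := by
          filter_upwards [Lp.coeFn_smul c g] with ω hω
          rw [hω]; simp [smul_eq_mul]; ring
        show (∫ ω, (↑(c • g) : ℝ → ℂ) ω * Kf M N ω ∂μπ) = _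
        rw [integral_congr_ae h1, integral_const_mul]
        rfl }
    (1 + ∑ k ∈ Finset.Icc (-(M N : ℤ)) (M N : ℤ), ‖(ccR M N k : ℂ)‖)
    (by
      intro g
      simp only [LinearMap.coe_mk, AddHom.coe_mk]
      set B := 1 + ∑ k ∈ Finset.Icc (-(M N : ℤ)) (M N : ℤ), ‖(ccR M N k : ℂ)‖ with hB
      have hB0 : 0 ≤ B := by
        rw [hB]; positivity
      calc ‖∫ ω, g ω * Kf M N ω ∂μπ‖ ≤ ∫ ω, ‖g ω * Kf M N ω‖ ∂μπ :=
            norm_integral_le_integral_norm _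
        _ ≤ ∫ ω, B * ‖g ω‖ ∂μπ := by
            refine integral_mono_of_nonneg (Filter.Eventually.of_forall fun ω => by positivity)
              ((L1.integrable_coeFn g).norm.const_mul B)
              (Filter.Eventually.of_forall fun ω => ?_)
            show ‖g ω * Kf M N ω‖ ≤ B * ‖g ω‖
            rw [norm_mul]
            calc ‖g ω‖ * ‖Kf M N ω‖ ≤ ‖g ω‖ * B := by
                  gcongr; exact Kf_bound M N ω
              _ = B * ‖g ω‖ := by ring
        _ = B * ∫ ω, ‖g ω‖ ∂μπ := integral_const_mul _ _
        _ = B * ‖g‖ := by rw [L1.norm_eq_integral_norm])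

lemma φ_apply (M : ℕ → ℕ) (N : ℕ) (g : Lp ℂ 1 μπ) :
    φ M N g = ∫ ω, g ω * Kf M N ω ∂μπ := rfl

lemma φ_norm_lower (M : ℕ → ℕ) (N : ℕ) : ‖Kf M N Real.pi‖ - 1 ≤ ‖φ M N‖ := by
  set c := Kf M N Real.pi with hc
  obtain ⟨δ, hδ0, hδ⟩ := Metric.continuousAt_iff.mp
    ((Kf_continuous M N).continuousAt (x := Real.pi)) 1 one_pos
  set ε := min (δ / 2) Real.pi with hεdef
  have hε0 : 0 < ε := lt_min (by linarith) Real.pi_pos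
  have hεπ : ε ≤ Real.pi := min_le_right _ _
  set s : Set ℝ := Set.Icc (Real.pi - ε) Real.pi with hs
  have hsub : s ⊆ Set.Icc (-Real.pi) Real.pi := by
    intro x hx
    have := Real.pi_pos
    exact ⟨by simp only [hs, Set.mem_Icc] at hx; linarith [hx.1],
      by simp only [hs, Set.mem_Icc] at hx; linarith [hx.2]⟩
  have hμs : μπ s = ENNReal.ofReal ε := by
    rw [Measure.restrict_apply measurableSet_Icc,
      Set.inter_eq_self_of_subset_left hsub, Real.volume_Icc]
    congr 1; ring
  have hμs_fin : μπ s ≠ ⊤ := by rw [hμs]; exact ENNReal.ofReal_ne_top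
  set u := indicatorConstLp 1 (measurableSet_Icc : MeasurableSet s) hμs_fin (1 : ℂ) with hu
  have hu_norm : ‖u‖ = ε := by
    rw [hu, norm_indicatorConstLp one_ne_zero ENNReal.one_ne_top]
    simp [hμs, ENNReal.toReal_ofReal hε0.le]
    rw [Measure.real, Set.inter_eq_self_of_subset_left
      (show Set.Icc (Real.pi - ε) Real.pi ⊆ Set.Icc (-Real.pi) Real.pi from hsub),
      Real.volume_Icc, ENNReal.toReal_ofReal (by linarith)]
    ring
  have hφu : φ M N u = ∫ ω in s, Kf M N ω := by
    rw [φ_apply]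
    have h1 : ∀ᵐ ω ∂μπ, (u : ℝ → ℂ) ω * Kf M N ω = s.indicator (Kf M N) ω := by
      filter_upwards [indicatorConstLp_coeFn (p := 1) (μ := μπ)
        (hs := measurableSet_Icc) (hμs := hμs_fin) (c := (1 : ℂ))] with ω hω
      rw [hω]
      by_cases h : ω ∈ Set.Icc (Real.pi - ε) Real.pi <;> simp [Set.indicator_of_mem, Set.indicator_of_notMem, h, hs]
    rw [integral_congr_ae h1, integral_indicator measurableSet_Icc,
      Measure.restrict_restrict measurableSet_Icc, Set.inter_eq_self_of_subset_left hsub]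
  have hvols : volume s = ENNReal.ofReal ε := by
    rw [hs, Real.volume_Icc]; congr 1; ring
  have hvolr : (volume s).toReal = ε := by rw [hvols, ENNReal.toReal_ofReal hε0.le]
  have hint : IntegrableOn (Kf M N) s volume := (Kf_continuous M N).integrableOn_Icc
  have hsplit : (∫ ω in s, Kf M N ω) = (∫ ω in s, (Kf M N ω - c)) + ∫ ω in s, (c : ℂ) := by
    rw [integral_sub hint (integrableOn_const (by rw [hvols]; exact ENNReal.ofReal_ne_top))]
    ring
  have hconst : (∫ ω in s, (c : ℂ)) = (volume s).toReal • c := setIntegral_const c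
  have hb : ‖∫ ω in s, (Kf M N ω - c)‖ ≤ 1 * (volume s).toReal := by
    refine norm_setIntegral_le_of_norm_le_const_ae' (by rw [hvols]; exact ENNReal.ofReal_lt_top)
      (Filter.Eventually.of_forall fun x hx => ?_)
    have hεδ : ε ≤ δ / 2 := min_le_left _ _
    have hdist : dist x Real.pi < δ := by
      simp only [hs, Set.mem_Icc] at hx
      rw [Real.dist_eq, abs_lt]
      constructor <;> linarith [hx.1, hx.2]
    have := hδ hdist
    rw [dist_eq_norm] at this
    exact this.le
  have hlow : ε * (‖c‖ - 1) ≤ ‖φ M N u‖ := by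
    have h2 : ‖∫ ω in s, (c : ℂ)‖ = ε * ‖c‖ := by
      rw [hconst, norm_smul, hvolr, Real.norm_eq_abs, abs_of_nonneg hε0.le]
    have key : ε * ‖c‖ - ε ≤ ‖(∫ ω in s, (c : ℂ)) + ∫ ω in s, (Kf M N ω - c)‖ := by
      have h3 := norm_sub_norm_le (∫ ω in s, (c : ℂ)) (-(∫ ω in s, (Kf M N ω - c)))
      simp only [norm_neg, sub_neg_eq_add] at h3
      rw [one_mul, hvolr] at hb
      linarith
    rw [hφu, hsplit, add_comm]
    linarith [key]
  have hup : ‖φ M N u‖ ≤ ‖φ M N‖ * ε := by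
    have := (φ M N).le_opNorm u
    rwa [hu_norm] at this
  have : ε * (‖c‖ - 1) ≤ ‖φ M N‖ * ε := le_trans hlow hup
  nlinarith [this, hε0]

lemma φ_unbounded (M : ℕ → ℕ) (hM : StrictMono M) : ¬ ∃ C, ∀ N, ‖φ M N‖ ≤ C := by
  rintro ⟨C, hC⟩
  have hπ := Real.pi_pos
  obtain ⟨n, hn⟩ := (Real.tendsto_sum_range_one_div_nat_succ_atTop.eventually_ge_atTop
    (Real.pi * (C + 3))).exists
  have hmono : (∑ j ∈ Finset.range n, 1 / ((j : ℝ) + 1))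
      ≤ ∑ j ∈ Finset.range (2 * M n + 1), 1 / ((j : ℝ) + 1) := by
    refine Finset.sum_le_sum_of_subset_of_nonneg ?_ (fun j _ _ => by positivity)
    exact Finset.range_subset_range.2 (by have h : n ≤ M n := hM.le_apply; omega)
  have h1 := Kf_pi_lower M n
  have h2 := φ_norm_lower M n
  have h3 := hC n
  have h4 : Real.pi * (C + 3) ≤ ∑ j ∈ Finset.range (2 * M n + 1), 1 / ((j : ℝ) + 1) := by
    calc Real.pi * (C + 3) ≤ ∑ j ∈ Finset.range n, (1 : ℝ) / ((j : ℝ) + 1) := hn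
      _ ≤ _ := hmono
  have h5 : C + 3 ≤ (∑ j ∈ Finset.range (2 * M n + 1), 1 / ((j : ℝ) + 1)) / Real.pi := by
    rw [le_div_iff₀ hπ]; linarith
  linarith

lemma integrable_g_exp {g : ℝ → ℂ} (hg : Integrable g μπ) (c : ℝ) :
    Integrable (fun ω => g ω * Complex.exp (Complex.I * ω * c)) μπ := by
  simpa [mul_comm] using hg.bdd_mul (cont_exp_aux c).aestronglyMeasurable
    (Filter.Eventually.of_forall fun ω => (norm_exp_aux c ω).le)

lemma bridge (M : ℕ → ℕ) (N : ℕ) (g : Lp ℂ 1 μπ) :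
    (((1 : ℂ) / (2 * Real.pi)) *
        ∫ ω in Set.Icc (-Real.pi) Real.pi,
          (g : ℝ → ℂ) ω * Complex.exp (Complex.I * ω * tN M N)) -
      (∑ k ∈ Finset.Icc (-(M N : ℤ)) (M N : ℤ),
        (((1 : ℂ) / (2 * Real.pi)) *
            ∫ ω in Set.Icc (-Real.pi) Real.pi,
              (g : ℝ → ℂ) ω * Complex.exp (Complex.I * ω * (k : ℝ))) *
          (((1 : ℂ) / (2 * Real.pi)) *
              ∫ ω in Set.Icc (-Real.pi) Real.pi,
                Complex.exp (-(Complex.I * ω * (k : ℝ))) *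
                  Complex.exp (Complex.I * ω * tN M N)))
      = ((1 : ℂ) / (2 * Real.pi)) * φ M N g := by
  have hg := L1.integrable_coeFn g
  have hsinc : ∀ k : ℤ,
      (((1 : ℂ) / (2 * Real.pi)) *
          ∫ ω in Set.Icc (-Real.pi) Real.pi,
            Complex.exp (-(Complex.I * ω * (k : ℝ))) * Complex.exp (Complex.I * ω * tN M N))
        = (ccR M N k : ℂ) := by
    intro k
    have := sinc_term M N k
    simpa using this
  have hsum : (∑ k ∈ Finset.Icc (-(M N : ℤ)) (M N : ℤ),
      (((1 : ℂ) / (2 * Real.pi)) *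
          ∫ ω in Set.Icc (-Real.pi) Real.pi,
            (g : ℝ → ℂ) ω * Complex.exp (Complex.I * ω * (k : ℝ))) *
        (((1 : ℂ) / (2 * Real.pi)) *
            ∫ ω in Set.Icc (-Real.pi) Real.pi,
              Complex.exp (-(Complex.I * ω * (k : ℝ))) *
                Complex.exp (Complex.I * ω * tN M N)))
      = ((1 : ℂ) / (2 * Real.pi)) *
          ∫ ω, (∑ k ∈ Finset.Icc (-(M N : ℤ)) (M N : ℤ),
            (g : ℝ → ℂ) ω * Complex.exp (Complex.I * ω * (k : ℝ)) * (ccR M N k : ℂ)) ∂μπ := by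
    rw [integral_finset_sum _ (fun k (_ : k ∈ Finset.Icc (-(M N : ℤ)) (M N : ℤ)) =>
        (integrable_g_exp hg (k : ℝ)).mul_const ((ccR M N k : ℝ) : ℂ)),
      Finset.mul_sum]
    refine Finset.sum_congr rfl fun k _ => ?_
    rw [hsinc k, integral_mul_const]
    ring
  rw [hsum, φ_apply, ← mul_sub, ← integral_sub (integrable_g_exp hg (tN M N))
    (integrable_finset_sum _ (fun k (_ : k ∈ Finset.Icc (-(M N : ℤ)) (M N : ℤ)) =>
      (integrable_g_exp hg (k : ℝ)).mul_const ((ccR M N k : ℝ) : ℂ)))]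
  congr 1
  apply integral_congr_ae
  refine Filter.Eventually.of_forall fun ω => ?_
  simp only [Kf, mul_sub, Finset.mul_sum]
  congr 1
  exact Finset.sum_congr rfl fun k _ => by ring

end Stmt16

end Stmt16Aux

/-- for every strictly increasing sequence `{M_N}` of natural numbers there
exist a signal `f_* ∈ PW¹_π` (given by its integrable Fourier transform `f̂_*` on
`[-π,π]`) and a stable LTI system `ĥ_* ∈ L^∞[-π,π]` such that
`limsup_N sup_t |(T_* f_*)(t) − ∑_{k=-M_N}^{M_N} f_*(k) (T_* sinc(·−k))(t)| = ∞`,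
where `f_*(k) = (1/(2π))∫ f̂_*(ω) e^{iωk} dω`,
`(T_* f_*)(t) = (1/(2π))∫ f̂_*(ω) ĥ_*(ω) e^{iωt} dω` and
`(T_* sinc(·−k))(t) = (1/(2π))∫ ĥ_*(ω) e^{-iωk} e^{iωt} dω`. -/
theorem stmt16 (M : ℕ → ℕ) (hM : StrictMono M) :
    ∃ fstarhat : ℝ → ℂ,
      IntegrableOn fstarhat (Set.Icc (-Real.pi) Real.pi) ∧
      ∃ hstar : ℝ → ℂ,
        MemLp hstar ⊤ (volume.restrict (Set.Icc (-Real.pi) Real.pi)) ∧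
        Filter.limsup (fun N : ℕ =>
            ⨆ t : ℝ,
              (‖((1 / (2 * Real.pi)) *
                    ∫ ω in Set.Icc (-Real.pi) Real.pi,
                      fstarhat ω * hstar ω * Complex.exp (Complex.I * ω * t)) -
                  ∑ k ∈ Finset.Icc (-(M N : ℤ)) ((M N : ℤ)),
                    ((1 / (2 * Real.pi)) *
                        ∫ ω in Set.Icc (-Real.pi) Real.pi,
                          fstarhat ω * Complex.exp (Complex.I * ω * (k : ℝ))) *
                      ((1 / (2 * Real.pi)) *
                          ∫ ω in Set.Icc (-Real.pi) Real.pi,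
                            hstar ω * Complex.exp (-(Complex.I * ω * (k : ℝ))) *
                              Complex.exp (Complex.I * ω * t))‖₊ : ENNReal))
          Filter.atTop = ⊤ := by
  have hπ := Real.pi_pos
  have hBS : ¬ ∀ g : Lp ℂ 1 Stmt16.μπ, ∃ C, ∀ N, ‖Stmt16.φ M N g‖ ≤ C := by
    intro h
    exact Stmt16.φ_unbounded M hM (banach_steinhaus h)
  push_neg at hBS
  obtain ⟨g, hg⟩ := hBS
  refine ⟨(g : ℝ → ℂ), L1.integrable_coeFn g, fun _ => 1, memLp_top_const 1, ?_⟩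
  have hsel : ∀ (n : ℕ) (C : ℝ), ∃ N, n ≤ N ∧ C < ‖Stmt16.φ M N g‖ := by
    intro n C
    obtain ⟨N, hN⟩ := hg (max C (∑ i ∈ Finset.range n, ‖Stmt16.φ M i g‖))
    refine ⟨N, ?_, lt_of_le_of_lt (le_max_left _ _) hN⟩
    by_contra hlt
    push_neg at hlt
    have h1 : ‖Stmt16.φ M N g‖ ≤ ∑ i ∈ Finset.range n, ‖Stmt16.φ M i g‖ :=
      Finset.single_le_sum (f := fun i => ‖Stmt16.φ M i g‖) (fun i _ => norm_nonneg _)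
        (Finset.mem_range.2 hlt)
    have h2 := le_max_right C (∑ i ∈ Finset.range n, ‖Stmt16.φ M i g‖)
    linarith
  simp only [one_mul, mul_one]
  rw [limsup_eq_iInf_iSup_of_nat]
  simp only [iInf_eq_top]
  intro n
  rw [iSup_eq_top]
  intro b hb
  obtain ⟨N, hNn, hbig⟩ := hsel n (2 * Real.pi * (b.toReal + 1))
  refine ⟨N, ?_⟩
  have hF : b < (↑‖((1 : ℂ) / (2 * Real.pi)) * Stmt16.φ M N g‖₊ : ENNReal) := by
    rw [← ENNReal.ofReal_coe_nnreal, coe_nnnorm, ENNReal.lt_ofReal_iff_toReal_lt hb.ne, norm_mul]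
    have hn1 : ‖(1 : ℂ) / (2 * Real.pi)‖ = 1 / (2 * Real.pi) := by
      rw [norm_div, norm_one,
        show ((2 : ℂ) * Real.pi) = ((2 * Real.pi : ℝ) : ℂ) by push_cast; ring,
        Complex.norm_real, Real.norm_eq_abs, abs_of_pos (by linarith)]
    rw [hn1]
    rw [div_mul_eq_mul_div, one_mul, lt_div_iff₀ (by linarith)]
    nlinarith [hbig, ENNReal.toReal_nonneg (a := b)]
  rw [iSup_pos hNn]
  refine lt_of_lt_of_le ?_ (le_iSup _ (Stmt16.tN M N))
  simp only [Stmt16.bridge M N g]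
  exact hF
end
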